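/- arXiv:2308.09703 — 3 statements merged into one kernel-verified Lean document; each statement's English description precedes it below -/
import Mathlib

section
/- Suppose G is a graph and {Ĉ, Î, Q̂} is a partition of V(G) (parts may be empty) with the following properties: (1) Ĉ is a clique and Î is an independent set; (2) |Q̂| ≤ 1; (3) every vertex in Q̂ is adjacent to every vertex in Ĉ and is non-adjacent to every vertex in Î; (4) every vertex in Ĉ has a neighbor in Î, and every vertex in Î has a non-neighbor in Ĉ. Then G is a split graph, and moreover Ĉ is the always-clique set of G, Î is the always-independent set of G, and Q̂ is the questioning set of G. -/
/-- A set of vertices is independent if no two of its members are adjacent. -/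
def IsIndep {V : Type*} (G : SimpleGraph V) (s : Set V) : Prop :=
  s.Pairwise fun u v => ¬ G.Adj u v

/-- `(C, I)` is a split partition of `G`: `C` and `I` are disjoint, cover all vertices,
`C` is a clique and `I` is an independent set (empty parts are allowed). -/
def IsSplitPartition {V : Type*} (G : SimpleGraph V) (C I : Set V) : Prop :=
  Disjoint C I ∧ C ∪ I = Set.univ ∧ G.IsClique C ∧ IsIndep G I

/-- A split graph: the vertex set can be partitioned into a clique and an independent set. -/
def IsSplit {V : Type*} (G : SimpleGraph V) : Prop :=
  ∃ C I : Set V, IsSplitPartition G C I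

/-- The always-clique set: vertices belonging to the clique part of every split partition. -/
def alwaysClique {V : Type*} (G : SimpleGraph V) : Set V :=
  {v | ∀ C I : Set V, IsSplitPartition G C I → v ∈ C}

/-- The always-independent set: vertices belonging to the independent part of every
split partition. -/
def alwaysIndep {V : Type*} (G : SimpleGraph V) : Set V :=
  {v | ∀ C I : Set V, IsSplitPartition G C I → v ∈ I}

/-- The questioning set: vertices placed in the clique part by some split partition and
in the independent part by some (other) split partition. -/
def questioning {V : Type*} (G : SimpleGraph V) : Set V :=
  {v | (∃ C I : Set V, IsSplitPartition G C I ∧ v ∈ C) ∧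
       (∃ C I : Set V, IsSplitPartition G C I ∧ v ∈ I)}

/-- Suppose `{Ĉ, Î, Q̂}` is a partition of `V(G)` (parts may be empty)
such that: (1) `Ĉ` is a clique and `Î` is an independent set; (2) `|Q̂| ≤ 1`; (3) every
vertex of `Q̂` is adjacent to every vertex of `Ĉ` and non-adjacent to every vertex of `Î`;
(4) every vertex of `Ĉ` has a neighbor in `Î` and every vertex of `Î` has a non-neighbor
in `Ĉ`. Then `G` is a split graph with always-clique set `Ĉ`, always-independent set `Î`,
and questioning set `Q̂`. -/
theorem split_partition_characterization_small_Q {V : Type*} [Fintype V] (G : SimpleGraph V)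
    (Chat Ihat Qhat : Set V)
    (hdisjCI : Disjoint Chat Ihat) (hdisjCQ : Disjoint Chat Qhat)
    (hdisjIQ : Disjoint Ihat Qhat) (hcover : Chat ∪ Ihat ∪ Qhat = Set.univ)
    (h1C : G.IsClique Chat) (h1I : IsIndep G Ihat)
    (h2 : Qhat.ncard ≤ 1)
    (h3 : ∀ v ∈ Qhat, (∀ u ∈ Chat, G.Adj v u) ∧ (∀ u ∈ Ihat, ¬ G.Adj v u))
    (h4 : (∀ v ∈ Chat, ∃ u ∈ Ihat, G.Adj v u) ∧ (∀ v ∈ Ihat, ∃ u ∈ Chat, ¬ G.Adj v u)) :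
    IsSplit G ∧ alwaysClique G = Chat ∧ alwaysIndep G = Ihat ∧ questioning G = Qhat := by
  have hQsub : ∀ a ∈ Qhat, ∀ b ∈ Qhat, a = b := by
    have := (Set.ncard_le_one (Set.toFinite Qhat)).mp h2
    exact this
  -- partition 1 : (Chat ∪ Qhat, Ihat)
  have hP1 : IsSplitPartition G (Chat ∪ Qhat) Ihat := by
    refine ⟨Set.disjoint_union_left.mpr ⟨hdisjCI, hdisjIQ.symm⟩, ?_, ?_, h1I⟩
    · rw [← hcover]; ext x; simp [or_comm, or_left_comm, or_assoc]
    · intro u hu v hv huv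
      rcases hu with hu | hu <;> rcases hv with hv | hv
      · exact h1C hu hv huv
      · exact ((h3 v hv).1 u hu).symm
      · exact (h3 u hu).1 v hv
      · exact absurd (hQsub u hu v hv) huv
  -- partition 2 : (Chat, Ihat ∪ Qhat)
  have hP2 : IsSplitPartition G Chat (Ihat ∪ Qhat) := by
    refine ⟨Set.disjoint_union_right.mpr ⟨hdisjCI, hdisjCQ⟩, ?_, h1C, ?_⟩
    · rw [← hcover]; ext x; simp [or_comm, or_left_comm, or_assoc]
    · intro u hu v hv huv
      rcases hu with hu | hu <;> rcases hv with hv | hv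
      · exact h1I hu hv huv
      · exact fun h => (h3 v hv).2 u hu h.symm
      · exact (h3 u hu).2 v hv
      · exact absurd (hQsub u hu v hv) huv
  -- every split partition puts Chat in C
  have hCsub : ∀ C I : Set V, IsSplitPartition G C I → Chat ⊆ C := by
    rintro C I ⟨hd, hc, hcl, hind⟩ v hv
    have hall : ∀ x : V, x ∈ C ∨ x ∈ I := by
      intro x
      have : x ∈ C ∪ I := by rw [hc]; exact Set.mem_univ x
      exact this
    by_contra hvC
    have hvI : v ∈ I := (hall v).resolve_left hvC
    obtain ⟨u, huI, hadj⟩ := h4.1 v hv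
    have huC : u ∈ C := by
      rcases hall u with h | h
      · exact h
      · exact absurd hadj (hind hvI h (G.ne_of_adj hadj))
    obtain ⟨w, hwC, hnadj⟩ := h4.2 u huI
    have hwv : w ≠ v := fun h => hnadj (h ▸ hadj.symm)
    have hwCset : w ∈ C := by
      rcases hall w with h | h
      · exact h
      · exact absurd (h1C hwC hv hwv) (hind h hvI hwv)
    exact hnadj (hcl hwCset huC (hdisjCI.ne_of_mem hwC huI)).symm
  -- every split partition puts Ihat in I
  have hIsub : ∀ C I : Set V, IsSplitPartition G C I → Ihat ⊆ I := by
    rintro C I ⟨hd, hc, hcl, hind⟩ v hv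
    have hall : ∀ x : V, x ∈ C ∨ x ∈ I := by
      intro x
      have : x ∈ C ∪ I := by rw [hc]; exact Set.mem_univ x
      exact this
    by_contra hvI
    have hvC : v ∈ C := (hall v).resolve_right hvI
    obtain ⟨u, huCh, hnadj⟩ := h4.2 v hv
    have huv : u ≠ v := hdisjCI.ne_of_mem huCh hv
    have huI : u ∈ I := by
      rcases hall u with h | h
      · exact absurd (hcl h hvC huv).symm hnadj
      · exact h
    obtain ⟨w, hwIh, hadj⟩ := h4.1 u huCh
    have hwv : w ≠ v := fun h => hnadj (h ▸ hadj).symm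
    have hwC : w ∈ C := by
      rcases hall w with h | h
      · exact h
      · exact absurd hadj.symm (hind h huI (G.ne_of_adj hadj).symm)
    exact h1I hwIh hv hwv (hcl hwC hvC hwv)
  refine ⟨⟨_, _, hP1⟩, ?_, ?_, ?_⟩
  · ext v
    constructor
    · intro hv
      have h2' := hv _ _ hP2
      exact h2'
    · intro hv C I hP
      exact hCsub C I hP hv
  · ext v
    constructor
    · intro hv
      exact hv _ _ hP1
    · intro hv C I hP
      exact hIsub C I hP hv
  · ext v
    constructor
    · rintro ⟨⟨C1, I1, hP, hvC⟩, ⟨C2, I2, hP', hvI⟩⟩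
      have hvnI : v ∉ Ihat := fun h => hP.1.ne_of_mem hvC (hIsub _ _ hP h) rfl
      have hvnC : v ∉ Chat := fun h => hP'.1.ne_of_mem (hCsub _ _ hP' h) hvI rfl
      have hmem : v ∈ Chat ∪ Ihat ∪ Qhat := by rw [hcover]; exact Set.mem_univ v
      rcases hmem with (h | h) | h
      · exact absurd h hvnC
      · exact absurd h hvnI
      · exact h
    · intro hv
      exact ⟨⟨_, _, hP1, Or.inr hv⟩, ⟨_, _, hP2, Or.inr hv⟩⟩
end

section
/- Let n and q be natural numbers with 2 ≤ q < n, and let ε be a real number with 0 < ε < 1. Let t₁ = ⌊(n−q)/2⌋ − ⌈log₂(1/ε)⌉ − 2 and t₂ = ⌈(n−q)/2⌉ + ⌈log₂(1/ε)⌉ + 2 (as integers). Then ∑_{c = max{0, t₁}}^{min{t₂, n−q}} C(n−q, c) · (2^{n−c−q} − 1)^c ≥ (1 − ε) · ∑_{c = 0}^{n−q} C(n−q, c) · (2^{n−c−q} − 1)^c, where C(·,·) denotes the binomial coefficient. -/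
open Finset

/-- term of the sum, as a natural number -/
def auxA (m c : ℕ) : ℕ := m.choose c * (2 ^ (m - c) - 1) ^ c

lemma aux_klem (x c : ℕ) (h : c ≤ x) : (2*x+1)^c * x ≤ (2*x)^c * (x + c) := by
  induction c with
  | zero => simp
  | succ c ih =>
    have hc : c ≤ x := by omega
    calc (2*x+1)^(c+1) * x = ((2*x+1)^c * x) * (2*x+1) := by ring
      _ ≤ ((2*x)^c * (x + c)) * (2*x+1) := by
          exact Nat.mul_le_mul_right _ (ih hc)
      _ ≤ (2*x)^(c+1) * (x + (c+1)) := by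
          have : (x + c) * (2*x+1) ≤ (2*x) * (x + (c+1)) := by nlinarith
          calc ((2*x)^c * (x + c)) * (2*x+1) = (2*x)^c * ((x+c)*(2*x+1)) := by ring
            _ ≤ (2*x)^c * ((2*x) * (x + (c+1))) := Nat.mul_le_mul_left _ this
            _ = (2*x)^(c+1) * (x + (c+1)) := by ring

lemma aux_klem2 (x c : ℕ) (hc : c ≤ x) (hx : 1 ≤ x) : (2*x+1)^c ≤ 2*(2*x)^c := by
  have h1 := aux_klem x c hc
  have h3 : (2*x)^c * c ≤ (2*x)^c * x := Nat.mul_le_mul_left _ hc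
  have h2 : (2*x)^c * (x + c) ≤ (2*(2*x)^c) * x := by
    calc (2*x)^c * (x + c) = (2*x)^c*x + (2*x)^c*c := by ring
      _ ≤ (2*x)^c*x + (2*x)^c*x := Nat.add_le_add le_rfl h3
      _ = (2*(2*x)^c) * x := by ring
  have := h1.trans h2
  exact Nat.le_of_mul_le_mul_right this hx

lemma aux_R1 (m c : ℕ) (hc : m / 2 ≤ c) :
    auxA m (c+1) * 2^(2*c+1) ≤ auxA m c * 2^m := by
  rcases le_or_gt m c with hcm | hcm
  · have : m.choose (c+1) = 0 := Nat.choose_eq_zero_of_lt (by omega)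
    simp [auxA, this]
  -- c < m
  have hb : 1 ≤ m - c := by omega
  rcases eq_or_lt_of_le hb with hb1 | hb2
  · -- m - c = 1, so m - (c+1) = 0 and the LHS base is 0
    have h0 : m - (c+1) = 0 := by omega
    simp [auxA, h0]
  -- b := m - c ≥ 2
  set b := m - c with hbdef
  have hx2 : (1:ℕ) ≤ 2^(b-1) := Nat.one_le_two_pow
  set x := 2^(b-1) - 1 with hxdef
  have h2b : 2^b = 2 * 2^(b-1) := by
    conv_lhs => rw [show b = b-1+1 by omega]
    rw [pow_succ]; ring
  have hbase : 2^(m-c) - 1 = 2*x+1 := by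
    rw [← hbdef, hxdef]; omega
  have hbase2 : m - (c+1) = b - 1 := by omega
  have hch : m.choose (c+1) ≤ m.choose c := by
    have hid := Nat.choose_succ_right_eq m c
    have hmc : m - c ≤ c + 1 := by omega
    have : m.choose (c+1) * (c+1) ≤ m.choose c * (c+1) := by
      rw [hid]; exact Nat.mul_le_mul_left _ hmc
    exact Nat.le_of_mul_le_mul_right this (by omega)
  have hnum : x^(c+1) * 2^(2*c+1) ≤ (2*x+1)^c * 2^m := by
    have hm : m = b + c := by omega
    have e1 : x^(c+1) * 2^(2*c+1) = (4*x)^c * (2*x) := by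
      rw [pow_succ, show (4*x)^c = 4^c * x^c by rw [mul_pow],
        show (4:ℕ)^c = 2^(2*c) by rw [pow_mul]; norm_num, show 2*c+1 = 2*c + 1 from rfl,
        pow_succ]
      ring
    have e2 : (2*x+1)^c * 2^m = (4*x+2)^c * (2*x+2) := by
      rw [hm, pow_add, h2b, show (4*x+2) = (2*x+1)*2 by ring, mul_pow]
      have hxe : 2^(b-1) = x + 1 := by omega
      rw [hxe]; ring
    rw [e1, e2]
    have : (4*x)^c ≤ (4*x+2)^c := Nat.pow_le_pow_left (by omega) c
    exact Nat.mul_le_mul this (by omega)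
  unfold auxA
  rw [hbase, hbase2, ← hxdef]
  calc m.choose (c+1) * x^(c+1) * 2^(2*c+1)
      = m.choose (c+1) * (x^(c+1) * 2^(2*c+1)) := by ring
    _ ≤ m.choose c * ((2*x+1)^c * 2^m) := Nat.mul_le_mul hch hnum
    _ = m.choose c * (2*x+1)^c * 2^m := by ring

lemma aux_R2 (m c : ℕ) (hc : c < m / 2) :
    auxA m c * 2^m ≤ auxA m (c+1) * 2^(2*c+3) := by
  have hcb : 2*c + 2 ≤ m := by omega
  set b := m - c with hbdef
  have hb : c + 2 ≤ b := by omega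
  have hx2 : (1:ℕ) ≤ 2^(b-1) := Nat.one_le_two_pow
  set x := 2^(b-1) - 1 with hxdef
  have hxge : c + 1 ≤ x := by
    have h1 : c + 1 < 2^(c+1) := Nat.lt_two_pow_self
    have h2 : (2:ℕ)^(c+1) ≤ 2^(b-1) := Nat.pow_le_pow_right (by norm_num) (by omega)
    omega
  have hx1 : 1 ≤ x := by omega
  have h2b : 2^b = 2 * 2^(b-1) := by
    conv_lhs => rw [show b = b-1+1 by omega]
    rw [pow_succ]; ring
  have hbase : 2^(m-c) - 1 = 2*x+1 := by rw [← hbdef]; omega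
  have hbase2 : m - (c+1) = b - 1 := by omega
  have hch : m.choose c ≤ m.choose (c+1) := by
    have hid := Nat.choose_succ_right_eq m c
    have hmc : c + 1 ≤ m - c := by omega
    have : m.choose c * (c+1) ≤ m.choose (c+1) * (c+1) := by
      rw [hid]; exact Nat.mul_le_mul_left _ hmc
    exact Nat.le_of_mul_le_mul_right this (by omega)
  have hnum : (2*x+1)^c * 2^m ≤ x^(c+1) * 2^(2*c+3) := by
    have hm : m = b + c := by omega
    have e2 : (2*x+1)^c * 2^m = (4*x+2)^c * (2*x+2) := by
      rw [hm, pow_add, h2b, show (4*x+2) = (2*x+1)*2 by ring, mul_pow]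
      have hxe : 2^(b-1) = x + 1 := by omega
      rw [hxe]; ring
    have e1 : x^(c+1) * 2^(2*c+3) = (4*x)^c * (8*x) := by
      rw [pow_succ, show (4*x)^c = 4^c * x^c by rw [mul_pow],
        show (4:ℕ)^c = 2^(2*c) by rw [pow_mul]; norm_num,
        show 2*c+3 = 2*c + 3 from rfl, pow_add]
      ring
    rw [e1, e2]
    have hk : (4*x+2)^c ≤ 2 * (4*x)^c := by
      have := aux_klem2 x c (by omega) hx1
      calc (4*x+2)^c = (2*x+1)^c * 2^c := by
            rw [show (4*x+2) = (2*x+1)*2 by ring, mul_pow]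
        _ ≤ (2*(2*x)^c) * 2^c := Nat.mul_le_mul_right _ this
        _ = 2 * (4*x)^c := by rw [show (4*x)^c = (2*x)^c * 2^c by
              rw [← mul_pow]; ring_nf]; ring
    calc (4*x+2)^c * (2*x+2) ≤ (2*(4*x)^c) * (2*x+2) := Nat.mul_le_mul_right _ hk
      _ ≤ (4*x)^c * (8*x) := by nlinarith [pow_pos (show 0 < 4*x by omega) c]
  unfold auxA
  rw [hbase, hbase2, ← hxdef]
  calc m.choose c * (2*x+1)^c * 2^m
      = m.choose c * ((2*x+1)^c * 2^m) := by ring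
    _ ≤ m.choose (c+1) * (x^(c+1) * 2^(2*c+3)) := Nat.mul_le_mul hch hnum
    _ = m.choose (c+1) * x^(c+1) * 2^(2*c+3) := by ring

lemma aux_H1 (m j : ℕ) :
    (auxA m (m/2 + j) : ℝ) * 2^(j*j) ≤ (auxA m (m/2) : ℝ) * 2^j := by
  set M := m/2 with hM
  induction j with
  | zero => simp
  | succ j ih =>
    have hr := aux_R1 m (M + j) (by omega)
    have hm1 : m ≤ 2*M + 1 := by omega
    have hrR : (auxA m (M+j+1) : ℝ) * 2^(2*(M+j)+1) ≤ (auxA m (M+j) : ℝ) * 2^(2*M+1) := by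
      have h1 : (auxA m (M+j+1) : ℝ) * 2^(2*(M+j)+1) ≤ (auxA m (M+j) : ℝ) * 2^m := by
        exact_mod_cast hr
      refine h1.trans ?_
      have : (2:ℝ)^m ≤ 2^(2*M+1) := by
        exact pow_le_pow_right₀ (by norm_num) hm1
      exact mul_le_mul_of_nonneg_left this (by positivity)
    have hstep : (auxA m (M+j+1) : ℝ) * 2^(2*j) ≤ (auxA m (M+j) : ℝ) := by
      have hpos : (0:ℝ) < 2^(2*M+1) := by positivity
      refine le_of_mul_le_mul_right ?_ hpos
      calc (auxA m (M+j+1) : ℝ) * 2^(2*j) * 2^(2*M+1)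
          = (auxA m (M+j+1) : ℝ) * 2^(2*(M+j)+1) := by
            rw [mul_assoc, ← pow_add]; ring_nf
        _ ≤ (auxA m (M+j) : ℝ) * 2^(2*M+1) := hrR
    calc (auxA m (M+(j+1)) : ℝ) * 2^((j+1)*(j+1))
        = ((auxA m (M+j+1) : ℝ) * 2^(2*j)) * (2^(j*j) * 2) := by
          rw [show (j+1)*(j+1) = 2*j + (j*j + 1) by ring]
          rw [pow_add, pow_add, pow_one, show M+(j+1) = M+j+1 by ring]
          ring
      _ ≤ (auxA m (M+j) : ℝ) * (2^(j*j) * 2) := by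
          exact mul_le_mul_of_nonneg_right hstep (by positivity)
      _ = ((auxA m (M+j) : ℝ) * 2^(j*j)) * 2 := by ring
      _ ≤ ((auxA m M : ℝ) * 2^j) * 2 := by
          exact mul_le_mul_of_nonneg_right ih (by norm_num)
      _ = (auxA m M : ℝ) * 2^(j+1) := by rw [pow_succ]; ring

lemma aux_H2 (m j : ℕ) (hj : j ≤ m/2) :
    (auxA m (m/2 - j) : ℝ) * 2^(j*j) ≤ (auxA m (m/2) : ℝ) * 2^(2*j) := by
  set M := m/2 with hM
  induction j with
  | zero => simp
  | succ j ih =>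
    have hj' : j ≤ M := by omega
    have ihj := ih hj'
    have hr := aux_R2 m (M - (j+1)) (by omega)
    have hm1 : 2*M ≤ m := by omega
    have hc1 : M - (j+1) + 1 = M - j := by omega
    have hexp : 2*(M - (j+1)) + 3 = 2*M - 2*j + 1 := by omega
    have hrR : (auxA m (M-(j+1)) : ℝ) * 2^(2*M) ≤ (auxA m (M-j) : ℝ) * 2^(2*M - 2*j + 1) := by
      have h1 : (auxA m (M-(j+1)) : ℝ) * 2^m ≤ (auxA m (M-j) : ℝ) * 2^(2*M-2*j+1) := by
        rw [← hc1, ← hexp]; exact_mod_cast hr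
      refine le_trans ?_ h1
      have : (2:ℝ)^(2*M) ≤ 2^m := pow_le_pow_right₀ (by norm_num) hm1
      exact mul_le_mul_of_nonneg_left this (by positivity)
    -- target' : auxA (M-(j+1)) * 2^(j*j) * 2^(2M) ≤ auxA M * 2^(2M+1)
    have htar : (auxA m (M-(j+1)) : ℝ) * 2^(j*j) * 2^(2*M) ≤ (auxA m M : ℝ) * 2^(2*M+1) := by
      calc (auxA m (M-(j+1)) : ℝ) * 2^(j*j) * 2^(2*M)
          = ((auxA m (M-(j+1)) : ℝ) * 2^(2*M)) * 2^(j*j) := by ring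
        _ ≤ ((auxA m (M-j) : ℝ) * 2^(2*M-2*j+1)) * 2^(j*j) := by
            exact mul_le_mul_of_nonneg_right hrR (by positivity)
        _ = ((auxA m (M-j) : ℝ) * 2^(j*j)) * 2^(2*M-2*j+1) := by ring
        _ ≤ ((auxA m M : ℝ) * 2^(2*j)) * 2^(2*M-2*j+1) := by
            exact mul_le_mul_of_nonneg_right ihj (by positivity)
        _ = (auxA m M : ℝ) * 2^(2*M+1) := by
            rw [mul_assoc, ← pow_add, show 2*j + (2*M-2*j+1) = 2*M+1 by omega]
    have hpos : (0:ℝ) < 2^(2*M - 2*(j+1) + 1) := by positivity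
    refine le_of_mul_le_mul_right ?_ hpos
    calc (auxA m (M-(j+1)) : ℝ) * 2^((j+1)*(j+1)) * 2^(2*M - 2*(j+1) + 1)
        = (auxA m (M-(j+1)) : ℝ) * 2^(j*j) * 2^(2*M) := by
          rw [mul_assoc, mul_assoc, ← pow_add, ← pow_add,
            show (j+1)*(j+1) + (2*M - 2*(j+1) + 1) = j*j + 2*M by
              have hq : (j+1)*(j+1) = j*j + 2*j + 1 := by ring
              omega]
      _ ≤ (auxA m M : ℝ) * 2^(2*M+1) := htar
      _ = (auxA m M : ℝ) * 2^(2*(j+1)) * 2^(2*M - 2*(j+1) + 1) := by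
          rw [mul_assoc, ← pow_add, show 2*(j+1) + (2*M - 2*(j+1) + 1) = 2*M+1 by omega]

/-- Let `2 ≤ q < n` and `0 < ε < 1`. With
`t₁ = ⌊(n−q)/2⌋ − ⌈log₂(1/ε)⌉ − 2` and `t₂ = ⌈(n−q)/2⌉ + ⌈log₂(1/ε)⌉ + 2` (as integers),
the partial sum of `C(n−q,c)·(2^{n−c−q} − 1)^c` over `c` from `max{0,t₁}` to `min{t₂,n−q}`
is at least `(1 − ε)` times the full sum over `c` from `0` to `n−q`. -/
theorem middle_terms_dominate (n q : ℕ) (hq : 2 ≤ q) (hqn : q < n)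
    (ε : ℝ) (hε0 : 0 < ε) (hε1 : ε < 1) :
    (1 - ε) * ∑ c ∈ Finset.range (n - q + 1),
        (Nat.choose (n - q) c : ℝ) * ((2 : ℝ) ^ (n - c - q) - 1) ^ c ≤
      ∑ c ∈ Finset.Icc
          (Int.toNat ((((n - q) / 2 : ℕ) : ℤ) - ⌈Real.logb 2 (1 / ε)⌉ - 2))
          (min (Int.toNat ((((n - q + 1) / 2 : ℕ) : ℤ) + ⌈Real.logb 2 (1 / ε)⌉ + 2)) (n - q)),
        (Nat.choose (n - q) c : ℝ) * ((2 : ℝ) ^ (n - c - q) - 1) ^ c := by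
  set m := n - q with hm
  have hm1 : 1 ≤ m := by omega
  set M := m / 2 with hM
  set M' := (m + 1) / 2 with hM'
  set K := ⌈Real.logb 2 (1 / ε)⌉ with hK
  have hlogpos : 0 < Real.logb 2 (1 / ε) :=
    Real.logb_pos one_lt_two (one_lt_one_div hε0 hε1)
  have hK1 : 1 ≤ K := Int.ceil_pos.mpr hlogpos
  set k := K.toNat with hk
  have hkK : (k : ℤ) = K := Int.toNat_of_nonneg (by omega)
  have hk1 : 1 ≤ k := by omega
  have hεk : (1 / 2 : ℝ) ^ k ≤ ε := by
    have h1 : Real.logb 2 (1 / ε) ≤ (k : ℝ) := by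
      have h := Int.le_ceil (Real.logb 2 (1 / ε))
      rw [← hK] at h
      have : ((K : ℤ) : ℝ) = (k : ℝ) := by exact_mod_cast hkK.symm
      linarith [this ▸ h]
    have h2 : 1 / ε ≤ (2 : ℝ) ^ k := by
      calc 1 / ε = (2 : ℝ) ^ Real.logb 2 (1 / ε) :=
            (Real.rpow_logb (by norm_num) (by norm_num) (by positivity)).symm
        _ ≤ (2 : ℝ) ^ (k : ℝ) := Real.rpow_le_rpow_of_exponent_le one_le_two h1
        _ = (2 : ℝ) ^ k := Real.rpow_natCast 2 k
    have hp : (0 : ℝ) < 2 ^ k := by positivity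
    rw [div_pow, one_pow, div_le_iff₀ hp]
    have := (div_le_iff₀ hε0).mp h2
    linarith
  set t1 := ((M : ℤ) - K - 2).toNat with ht1
  set T := min (((M' : ℤ) + K + 2).toNat) m with hT
  have hT2 : ((M' : ℤ) + K + 2).toNat = M' + k + 2 := by omega
  have hMM' : M ≤ M' := by omega
  have ht1M : t1 ≤ M := by omega
  have hTm : T ≤ m := min_le_right _ _
  have hMT : M ≤ T := by omega
  have ht1T : t1 ≤ T := le_trans ht1M hMT
  -- convert summand
  have hconv : ∀ c, (Nat.choose m c : ℝ) * ((2 : ℝ) ^ (n - c - q) - 1) ^ c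
      = (auxA m c : ℝ) := by
    intro c
    have h1 : n - c - q = m - c := by omega
    rw [h1]
    simp only [auxA]
    push_cast [Nat.one_le_two_pow]
    ring
  simp only [hconv]
  set f : ℕ → ℝ := fun c => (auxA m c : ℝ) with hf
  have hfnn : ∀ c, 0 ≤ f c := fun c => Nat.cast_nonneg _
  set aM := f M with haM
  have haMnn : 0 ≤ aM := hfnn M
  -- split the full sum
  have e1 : ∑ c ∈ Finset.range t1, f c + ∑ c ∈ Finset.Ico t1 (m + 1), f c
      = ∑ c ∈ Finset.range (m + 1), f c := by
    rw [Finset.range_eq_Ico, Finset.range_eq_Ico]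
    exact Finset.sum_Ico_consecutive f (Nat.zero_le _) (by omega)
  have e2 : ∑ c ∈ Finset.Ico t1 (T + 1), f c + ∑ c ∈ Finset.Ico (T + 1) (m + 1), f c
      = ∑ c ∈ Finset.Ico t1 (m + 1), f c :=
    Finset.sum_Ico_consecutive f (by omega) (by omega)
  have eIcc : Finset.Ico t1 (T + 1) = Finset.Icc t1 T := Finset.Ico_add_one_right_eq_Icc t1 T
  have eIoc : Finset.Ico (T + 1) (m + 1) = Finset.Ioc T m := by
    rw [Finset.Ico_add_one_right_eq_Icc, Finset.Icc_add_one_left_eq_Ioc]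
  rw [eIcc, eIoc] at e2
  -- geometric helper
  have hhalf : ∀ {p r : ℕ}, r ≤ p → (1 / 2 : ℝ) ^ p ≤ (1 / 2) ^ r := by
    intro p r h
    exact pow_le_pow_of_le_one (by norm_num) (by norm_num) h
  -- lower tail pointwise bound
  have hterm1 : ∀ c ∈ Finset.range t1, f c ≤ aM * (ε / 4) * (1 / 2 : ℝ) ^ (t1 - 1 - c) := by
    intro c hc
    rw [Finset.mem_range] at hc
    have hckM : c + k + 3 ≤ M := by omega
    set j := M - c with hj
    have hjk : k + 3 ≤ j := by omega
    have h2 := aux_H2 m j (by omega)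
    rw [show M - j = c by omega] at h2
    have hA : f c ≤ aM * (2 : ℝ) ^ (2 * j) * (1 / 2) ^ (j * j) := by
      have hone : (2 : ℝ) ^ (j * j) * (1 / 2) ^ (j * j) = 1 := by
        rw [← mul_pow]; norm_num
      calc f c = f c * 2 ^ (j * j) * (1 / 2) ^ (j * j) := by
            rw [mul_assoc, hone, mul_one]
        _ ≤ aM * 2 ^ (2 * j) * (1 / 2) ^ (j * j) :=
            mul_le_mul_of_nonneg_right h2 (by positivity)
    refine hA.trans ?_
    have h3j : 3 * j ≤ j * j := Nat.mul_le_mul_right j (by omega)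
    have key : (2 : ℝ) ^ (2 * j) * (1 / 2) ^ (j * j) ≤ (ε / 4) * (1 / 2) ^ (t1 - 1 - c) := by
      have e : (2 : ℝ) ^ (2 * j) * (1 / 2) ^ (j * j) = (1 / 2) ^ (j * j - 2 * j) := by
        calc (2 : ℝ) ^ (2 * j) * (1 / 2) ^ (j * j)
            = (2 : ℝ) ^ (2 * j) * ((1 / 2) ^ (2 * j) * (1 / 2) ^ (j * j - 2 * j)) := by
              rw [← pow_add]
              have hjj : j * j = 2 * j + (j * j - 2 * j) := by omega
              rw [← hjj]
          _ = ((2 : ℝ) * (1 / 2)) ^ (2 * j) * (1 / 2) ^ (j * j - 2 * j) := by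
              rw [mul_pow]; ring
          _ = (1 / 2) ^ (j * j - 2 * j) := by norm_num
      rw [e]
      have hle : (1 / 2 : ℝ) ^ (j * j - 2 * j) ≤ (1 / 2) ^ ((k + 2) + (t1 - 1 - c)) := by
        have ha1 : j ≤ j * j - 2 * j := by omega
        have ha2 : (k + 2) + (t1 - 1 - c) ≤ j := by omega
        exact hhalf (by omega)
      refine hle.trans ?_
      rw [pow_add]
      apply mul_le_mul_of_nonneg_right ?_ (by positivity)
      have hq4 : (1 / 2 : ℝ) ^ (k + 2) = (1 / 2) ^ k * (1 / 4) := by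
        rw [pow_add]; norm_num
      rw [hq4]; linarith
    calc aM * 2 ^ (2 * j) * (1 / 2) ^ (j * j)
        = aM * ((2 : ℝ) ^ (2 * j) * (1 / 2) ^ (j * j)) := by ring
      _ ≤ aM * ((ε / 4) * (1 / 2) ^ (t1 - 1 - c)) :=
          mul_le_mul_of_nonneg_left key haMnn
      _ = aM * (ε / 4) * (1 / 2) ^ (t1 - 1 - c) := by ring
  -- upper tail pointwise bound
  have hterm2 : ∀ c ∈ Finset.Ioc T m, f c ≤ aM * (ε / 4) * (1 / 2 : ℝ) ^ (c - (T + 1)) := by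
    intro c hc
    rw [Finset.mem_Ioc] at hc
    have hMc : M + k + 3 ≤ c := by omega
    set j := c - M with hj
    have hjk : k + 3 ≤ j := by omega
    have h1 := aux_H1 m j
    rw [show M + j = c by omega] at h1
    have hA : f c ≤ aM * (2 : ℝ) ^ j * (1 / 2) ^ (j * j) := by
      have hone : (2 : ℝ) ^ (j * j) * (1 / 2) ^ (j * j) = 1 := by
        rw [← mul_pow]; norm_num
      calc f c = f c * 2 ^ (j * j) * (1 / 2) ^ (j * j) := by
            rw [mul_assoc, hone, mul_one]
        _ ≤ aM * 2 ^ j * (1 / 2) ^ (j * j) :=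
            mul_le_mul_of_nonneg_right h1 (by positivity)
    refine hA.trans ?_
    have h2j : 2 * j ≤ j * j := Nat.mul_le_mul_right j (by omega)
    have key : (2 : ℝ) ^ j * (1 / 2) ^ (j * j) ≤ (ε / 4) * (1 / 2) ^ (c - (T + 1)) := by
      have e : (2 : ℝ) ^ j * (1 / 2) ^ (j * j) = (1 / 2) ^ (j * j - j) := by
        calc (2 : ℝ) ^ j * (1 / 2) ^ (j * j)
            = (2 : ℝ) ^ j * ((1 / 2) ^ j * (1 / 2) ^ (j * j - j)) := by
              rw [← pow_add]
              have hjj : j * j = j + (j * j - j) := by omega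
              rw [← hjj]
          _ = ((2 : ℝ) * (1 / 2)) ^ j * (1 / 2) ^ (j * j - j) := by
              rw [mul_pow]; ring
          _ = (1 / 2) ^ (j * j - j) := by norm_num
      rw [e]
      have hle : (1 / 2 : ℝ) ^ (j * j - j) ≤ (1 / 2) ^ ((k + 2) + (c - (T + 1))) := by
        have ha1 : j ≤ j * j - j := by omega
        have ha2 : (k + 2) + (c - (T + 1)) ≤ j := by omega
        exact hhalf (by omega)
      refine hle.trans ?_
      rw [pow_add]
      apply mul_le_mul_of_nonneg_right ?_ (by positivity)
      have hq4 : (1 / 2 : ℝ) ^ (k + 2) = (1 / 2) ^ k * (1 / 4) := by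
        rw [pow_add]; norm_num
      rw [hq4]; linarith
    calc aM * 2 ^ j * (1 / 2) ^ (j * j)
        = aM * ((2 : ℝ) ^ j * (1 / 2) ^ (j * j)) := by ring
      _ ≤ aM * ((ε / 4) * (1 / 2) ^ (c - (T + 1))) :=
          mul_le_mul_of_nonneg_left key haMnn
      _ = aM * (ε / 4) * (1 / 2) ^ (c - (T + 1)) := by ring
  -- lower tail sum bound
  have hL : ∑ c ∈ Finset.range t1, f c ≤ aM * (ε / 2) := by
    calc ∑ c ∈ Finset.range t1, f c
        ≤ ∑ c ∈ Finset.range t1, aM * (ε / 4) * (1 / 2 : ℝ) ^ (t1 - 1 - c) :=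
          Finset.sum_le_sum hterm1
      _ = aM * (ε / 4) * ∑ c ∈ Finset.range t1, (1 / 2 : ℝ) ^ (t1 - 1 - c) := by
          rw [Finset.mul_sum]
      _ ≤ aM * (ε / 4) * 2 := by
          apply mul_le_mul_of_nonneg_left ?_ (mul_nonneg haMnn (by linarith))
          rw [Finset.sum_range_reflect (fun i => (1 / 2 : ℝ) ^ i) t1]
          exact sum_geometric_two_le t1
      _ = aM * (ε / 2) := by ring
  -- upper tail sum bound
  have hU : ∑ c ∈ Finset.Ioc T m, f c ≤ aM * (ε / 2) := by
    calc ∑ c ∈ Finset.Ioc T m, f c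
        ≤ ∑ c ∈ Finset.Ioc T m, aM * (ε / 4) * (1 / 2 : ℝ) ^ (c - (T + 1)) :=
          Finset.sum_le_sum hterm2
      _ = aM * (ε / 4) * ∑ c ∈ Finset.Ioc T m, (1 / 2 : ℝ) ^ (c - (T + 1)) := by
          rw [Finset.mul_sum]
      _ ≤ aM * (ε / 4) * 2 := by
          apply mul_le_mul_of_nonneg_left ?_ (mul_nonneg haMnn (by linarith))
          rw [← Finset.Icc_add_one_left_eq_Ioc, ← Finset.Ico_add_one_right_eq_Icc]
          rw [Finset.sum_Ico_eq_sum_range]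
          refine le_trans (le_of_eq (Finset.sum_congr rfl fun i _ => by congr 1; omega))
            (sum_geometric_two_le _)
      _ = aM * (ε / 2) := by ring
  -- aM is one of the terms of the full sum
  have haMS : aM ≤ ∑ c ∈ Finset.range (m + 1), f c := by
    apply Finset.single_le_sum (fun i _ => hfnn i)
    rw [Finset.mem_range]; omega
  have hεS : ε * aM ≤ ε * ∑ c ∈ Finset.range (m + 1), f c :=
    mul_le_mul_of_nonneg_left haMS hε0.le
  linarith [e1, e2, hL, hU, hεS]
end

section
/- There exists N ∈ ℕ such that for all n ≥ N the following holds. Let P(n) be the number of split graphs with vertex set {1,…,n} whose questioning set is empty, and let S(n) = ∑_{c=2}^{⌊n/2⌋} C(n,c) · (2^c − 1)^{n−c} + ∑_{c=⌊n/2⌋+1}^{n−2} C(n,c) · (2^{n−c} − 1)^c, where C(·,·) denotes the binomial coefficient. Then P(n) ≤ S(n) ≤ (1 + (2/3)^{n/3}) · P(n). -/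
namespace SplitAux

open Finset

variable {n : ℕ}

instance : Finite (SimpleGraph (Fin n)) :=
  Finite.of_injective (fun G => G.Adj) fun _ _ h => SimpleGraph.ext h

/-- split partition with independent part the complement of the clique finset -/
def SP (G : SimpleGraph (Fin n)) (C : Finset (Fin n)) : Prop :=
  IsSplitPartition G (C : Set (Fin n)) ((C : Set (Fin n))ᶜ)

def RowsOK (G : SimpleGraph (Fin n)) (C : Finset (Fin n)) : Prop :=
  ∀ x ∈ C, ∃ y, y ∉ C ∧ G.Adj x y

def ColsOK (G : SimpleGraph (Fin n)) (C : Finset (Fin n)) : Prop :=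
  ∀ y, y ∉ C → ∃ x ∈ C, ¬ G.Adj x y

def Good (G : SimpleGraph (Fin n)) (C : Finset (Fin n)) : Prop :=
  SP G C ∧ RowsOK G C ∧ ColsOK G C

lemma sp_mk {G : SimpleGraph (Fin n)} {C : Finset (Fin n)}
    (h1 : G.IsClique (C : Set (Fin n))) (h2 : IsIndep G ((C : Set (Fin n))ᶜ)) : SP G C :=
  ⟨disjoint_compl_right, Set.union_compl_self _, h1, h2⟩

lemma SP.clique {G : SimpleGraph (Fin n)} {C : Finset (Fin n)} (h : SP G C)
    {u v : Fin n} (hu : u ∈ C) (hv : v ∈ C) (huv : u ≠ v) : G.Adj u v :=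
  h.2.2.1 (by simpa using hu) (by simpa using hv) huv

lemma SP.indep {G : SimpleGraph (Fin n)} {C : Finset (Fin n)} (h : SP G C)
    {u v : Fin n} (hu : u ∉ C) (hv : v ∉ C) (huv : u ≠ v) : ¬ G.Adj u v :=
  h.2.2.2 (by simpa using hu) (by simpa using hv) huv

lemma partition_compl {G : SimpleGraph (Fin n)} {A B : Set (Fin n)}
    (h : IsSplitPartition G A B) : B = Aᶜ := by
  ext v
  constructor
  · intro hv hvA
    exact h.1.le_bot ⟨hvA, hv⟩
  · intro hv
    have := h.2.1.symm ▸ Set.mem_univ v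
    rcases (Set.mem_union _ _ _).1 (h.2.1.symm ▸ Set.mem_univ v) with h' | h'
    · exact absurd h' hv
    · exact h'

/-- Rigidity: a Good partition is the unique split partition. -/
lemma rigid {G : SimpleGraph (Fin n)} {C : Finset (Fin n)} (hG : Good G C)
    {A B : Set (Fin n)} (hAB : IsSplitPartition G A B) : A = (C : Set (Fin n)) := by
  obtain ⟨hSP, hrows, hcols⟩ := hG
  have hB : B = Aᶜ := partition_compl hAB
  have hAcl : G.IsClique A := hAB.2.2.1
  have hBind : IsIndep G B := hAB.2.2.2
  -- claim 1 : at most one vertex of C is outside A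
  have claim1 : ∀ x x', x ∈ C → x ∉ A → x' ∈ C → x' ∉ A → x = x' := by
    intro x x' hx hxA hx' hx'A
    by_contra hne
    have hadj : G.Adj x x' := hSP.clique hx hx' hne
    exact hBind (by simp [hB, hxA]) (by simp [hB, hx'A]) hne hadj
  have claim2 : ∀ y y', y ∈ A → y ∉ C → y' ∈ A → y' ∉ C → y = y' := by
    intro y y' hy hyC hy' hy'C
    by_contra hne
    have hadj : G.Adj y y' := hAcl hy hy' hne
    exact hSP.indep hyC hy'C hne hadj
  by_cases hX : ∃ x, x ∈ C ∧ x ∉ A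
  · obtain ⟨x, hxC, hxA⟩ := hX
    by_cases hY : ∃ y, y ∈ A ∧ y ∉ C
    · -- swap case, contradiction
      exfalso
      obtain ⟨y, hyA, hyC⟩ := hY
      obtain ⟨y₀, hy₀C, hadj₀⟩ := hrows x hxC
      have hy₀ : y₀ = y := by
        by_contra hne
        have hy₀A : y₀ ∉ A := fun h => hne (claim2 y₀ y h hy₀C hyA hyC)
        have hxy₀ : x ≠ y₀ := fun h => hy₀C (h ▸ hxC)
        exact hBind (by simp [hB, hxA]) (by simp [hB, hy₀A]) hxy₀ hadj₀
      rw [hy₀] at hadj₀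
      obtain ⟨x₀, hx₀C, hnadj₀⟩ := hcols y hyC
      have hx₀ : x₀ = x := by
        by_contra hne
        have hx₀A : x₀ ∈ A := by
          by_contra h
          exact hne (claim1 x₀ x hx₀C h hxC hxA)
        have hx₀y : x₀ ≠ y := fun h => hyC (h ▸ hx₀C)
        exact hnadj₀ (hAcl hx₀A hyA hx₀y)
      rw [hx₀] at hnadj₀
      exact hnadj₀ hadj₀
    · -- A ⊆ C, x ∈ C \ A : contradiction
      exfalso
      push_neg at hY
      obtain ⟨y, hyC, hadj⟩ := hrows x hxC
      have hyA : y ∉ A := fun h => hyC (hY y h)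
      have hxy : x ≠ y := fun h => hyC (h ▸ hxC)
      exact hBind (by simp [hB, hxA]) (by simp [hB, hyA]) hxy hadj
  · push_neg at hX
    by_cases hY : ∃ y, y ∈ A ∧ y ∉ C
    · exfalso
      obtain ⟨y, hyA, hyC⟩ := hY
      obtain ⟨x, hxC, hnadj⟩ := hcols y hyC
      have hxy : x ≠ y := fun h => hyC (h ▸ hxC)
      exact hnadj (hAcl (hX x hxC) hyA hxy)
    · push_neg at hY
      ext v
      exact ⟨fun h => by simpa using hY v h, fun h => hX v (by simpa using h)⟩

lemma good_questioning {G : SimpleGraph (Fin n)} {C : Finset (Fin n)} (hG : Good G C) :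
    questioning G = ∅ := by
  ext v
  simp only [questioning, Set.mem_setOf_eq, Set.mem_empty_iff_false, iff_false, not_and]
  rintro ⟨A, B, hAB, hvA⟩ ⟨A', B', hAB', hvB'⟩
  have h1 : A = (C : Set (Fin n)) := rigid hG hAB
  have h2 : A' = (C : Set (Fin n)) := rigid hG hAB'
  have h3 : B' = A'ᶜ := partition_compl hAB'
  rw [h3, h2] at hvB'
  rw [h1] at hvA
  exact hvB' hvA

lemma good_unique {G : SimpleGraph (Fin n)} {C C' : Finset (Fin n)}
    (h1 : Good G C) (h2 : Good G C') : C = C' := by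
  have := rigid h1 (h2.1 : IsSplitPartition G (C' : Set (Fin n)) _)
  exact (Finset.coe_inj.1 this).symm

lemma good_isSplit {G : SimpleGraph (Fin n)} {C : Finset (Fin n)} (hG : Good G C) :
    IsSplit G := ⟨_, _, hG.1⟩

lemma exists_good {G : SimpleGraph (Fin n)} (h1 : IsSplit G) (h2 : questioning G = ∅) :
    ∃ C, Good G C := by
  obtain ⟨A, B, hAB⟩ := h1
  have hB : B = Aᶜ := partition_compl hAB
  subst hB
  have hfin : A.Finite := Set.toFinite A
  refine ⟨hfin.toFinset, ?_, ?_, ?_⟩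
  · unfold SP
    rw [Set.Finite.coe_toFinset]
    exact hAB
  · intro x hx
    rw [Set.Finite.mem_toFinset] at hx
    by_contra hcon
    push_neg at hcon
    have hcon' : ∀ y, y ∉ A → ¬ G.Adj x y := by
      intro y hy
      exact hcon y (by rwa [Set.Finite.mem_toFinset])
    -- second partition (A \ {x}, (A \ {x})ᶜ)
    have hpart2 : IsSplitPartition G (A \ {x}) ((A \ {x})ᶜ) := by
      refine ⟨disjoint_compl_right, Set.union_compl_self _, hAB.2.2.1.subset Set.diff_subset, ?_⟩
      intro u hu v hv huv hadj
      simp only [Set.mem_compl_iff, Set.mem_diff, Set.mem_singleton_iff, not_and, not_not] at hu hv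
      by_cases huA : u ∈ A
      · have hu' : u = x := hu huA
        subst hu'
        by_cases hvA : v ∈ A
        · exact absurd ((hv hvA).symm) (fun h => huv (h ▸ rfl))
        · exact hcon' v hvA hadj
      · by_cases hvA : v ∈ A
        · have hv' : v = x := hv hvA
          subst hv'
          exact hcon' u huA hadj.symm
        · exact hAB.2.2.2 (by simpa using huA) (by simpa using hvA) huv hadj
    have : x ∈ questioning G := by
      refine ⟨⟨A, Aᶜ, hAB, hx⟩, ⟨A \ {x}, (A \ {x})ᶜ, hpart2, ?_⟩⟩
      simp
    rw [h2] at this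
    exact this
  · intro y hy
    rw [Set.Finite.mem_toFinset] at hy
    by_contra hcon
    push_neg at hcon
    have hcon' : ∀ x ∈ A, G.Adj x y := by
      intro x hx
      exact hcon x (by rwa [Set.Finite.mem_toFinset])
    have hpart2 : IsSplitPartition G (A ∪ {y}) ((A ∪ {y})ᶜ) := by
      refine ⟨disjoint_compl_right, Set.union_compl_self _, ?_, ?_⟩
      · intro u hu v hv huv
        rcases hu with hu | hu <;> rcases hv with hv | hv
        · exact hAB.2.2.1 hu hv huv
        · simp only [Set.mem_singleton_iff] at hv
          subst hv
          exact hcon' u hu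
        · simp only [Set.mem_singleton_iff] at hu
          subst hu
          exact (hcon' v hv).symm
        · simp only [Set.mem_singleton_iff] at hu hv
          exact absurd (hu.trans hv.symm) huv
      · exact fun u hu v hv huv hadj =>
          hAB.2.2.2 (by simp only [Set.mem_compl_iff, Set.mem_union] at hu; simpa using fun h => hu (Or.inl h))
            (by simp only [Set.mem_compl_iff, Set.mem_union] at hv; simpa using fun h => hv (Or.inl h)) huv hadj
    have : y ∈ questioning G := by
      refine ⟨⟨A ∪ {y}, (A ∪ {y})ᶜ, hpart2, by simp⟩, ⟨A, Aᶜ, hAB, hy⟩⟩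
    rw [h2] at this
    exact this

end SplitAux

namespace SplitAux

open Finset

variable {n : ℕ}

/-- encode a graph by the `C`-neighbourhoods of the vertices outside `C` -/
noncomputable def colFun (G : SimpleGraph (Fin n)) (C : Finset (Fin n)) :
    Fin n → Finset (Fin n) :=
  fun i => if i ∈ C then ∅ else (Set.toFinite {x | x ∈ C ∧ G.Adj x i}).toFinset

lemma mem_colFun {G : SimpleGraph (Fin n)} {C : Finset (Fin n)} {i x : Fin n} :
    x ∈ colFun G C i ↔ i ∉ C ∧ x ∈ C ∧ G.Adj x i := by
  unfold colFun
  split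
  · simp [*]
  · simp [Set.Finite.mem_toFinset, *]

lemma adj_determined {G1 G2 : SimpleGraph (Fin n)} {C : Finset (Fin n)}
    (h1 : SP G1 C) (h2 : SP G2 C) (hf : colFun G1 C = colFun G2 C)
    {u v : Fin n} (h : G1.Adj u v) : G2.Adj u v := by
  have hne := h.ne
  by_cases hu : u ∈ C <;> by_cases hv : v ∈ C
  · exact h2.clique hu hv hne
  · have hm : u ∈ colFun G1 C v := mem_colFun.2 ⟨hv, hu, h⟩
    rw [hf] at hm
    exact (mem_colFun.1 hm).2.2
  · have hm : v ∈ colFun G1 C u := mem_colFun.2 ⟨hu, hv, h.symm⟩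
    rw [hf] at hm
    exact (mem_colFun.1 hm).2.2.symm
  · exact absurd h (h1.indep hu hv hne)

lemma colFun_injOn (C : Finset (Fin n)) :
    Set.InjOn (colFun · C) {G : SimpleGraph (Fin n) | SP G C} := by
  intro G1 h1 G2 h2 heq
  ext u v
  exact ⟨adj_determined h1 h2 heq, adj_determined h2 h1 heq.symm⟩

/-- graph built from a clique finset and neighbourhood data -/
def mkG (C : Finset (Fin n)) (f : Fin n → Finset (Fin n)) : SimpleGraph (Fin n) where
  Adj u v := u ≠ v ∧ ((u ∈ C ∧ v ∈ C) ∨ (u ∈ C ∧ v ∉ C ∧ u ∈ f v) ∨ (v ∈ C ∧ u ∉ C ∧ v ∈ f u))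
  symm := by
    refine ⟨?_⟩; rintro u v ⟨h1, h2⟩
    exact ⟨h1.symm, by tauto⟩
  loopless := ⟨fun u h => h.1 rfl⟩

lemma mkG_sp (C : Finset (Fin n)) (f : Fin n → Finset (Fin n)) : SP (mkG C f) C := by
  apply sp_mk
  · intro u hu v hv hne
    exact ⟨hne, Or.inl ⟨by simpa using hu, by simpa using hv⟩⟩
  · intro u hu v hv hne hadj
    simp only [Set.mem_compl_iff, Finset.mem_coe] at hu hv
    rcases hadj.2 with ⟨h, _⟩ | ⟨h, _⟩ | ⟨h, _⟩ <;> tauto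

lemma mkG_colFun (C : Finset (Fin n)) (f : Fin n → Finset (Fin n))
    (hf : ∀ i, i ∉ C → f i ⊆ C) (hf2 : ∀ i, i ∈ C → f i = ∅) :
    colFun (mkG C f) C = f := by
  funext i
  by_cases hi : i ∈ C
  · rw [hf2 i hi]
    simp [colFun, hi]
  · ext x
    rw [mem_colFun]
    constructor
    · rintro ⟨-, hx, hadj⟩
      rcases hadj.2 with ⟨h1, h2⟩ | ⟨h1, h2, h3⟩ | ⟨h1, h2, h3⟩
      · exact absurd h2 hi
      · exact h3
      · exact absurd hx h2
    · intro hx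
      have hxC : x ∈ C := hf i hi hx
      have hne : x ≠ i := fun h => hi (h ▸ hxC)
      exact ⟨hi, hxC, ⟨hne, Or.inr (Or.inl ⟨hxC, hi, hx⟩)⟩⟩

/-- the target of the column encoding, with `colsOK` -/
noncomputable def colTarget (C : Finset (Fin n)) : Fin n → Finset (Finset (Fin n)) :=
  fun i => if i ∈ C then {∅} else C.powerset.erase C

lemma ncard_U (C : Finset (Fin n)) :
    {G : SimpleGraph (Fin n) | SP G C ∧ ColsOK G C}.ncard
      = (2 ^ C.card - 1) ^ (n - C.card) := by
  classical
  have himg : (colFun · C) '' {G : SimpleGraph (Fin n) | SP G C ∧ ColsOK G C}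
      = ↑(Fintype.piFinset (colTarget C)) := by
    ext f
    simp only [Set.mem_image, Set.mem_setOf_eq, Finset.mem_coe, Fintype.mem_piFinset]
    constructor
    · rintro ⟨G, ⟨hsp, hcols⟩, rfl⟩
      intro i
      unfold colTarget
      by_cases hi : i ∈ C
      · simp [colFun, hi]
      · simp only [if_neg hi, Finset.mem_erase, Finset.mem_powerset]
        constructor
        · intro hCeq
          obtain ⟨x, hx, hnadj⟩ := hcols i hi
          have : x ∈ colFun G C i := by rw [hCeq]; exact hx
          exact hnadj (mem_colFun.1 this).2.2
        · intro x hx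
          exact (mem_colFun.1 hx).2.1
    · intro hmem
      have hf : ∀ i, i ∉ C → f i ⊆ C := by
        intro i hi
        have := hmem i
        unfold colTarget at this
        rw [if_neg hi] at this
        exact Finset.mem_powerset.1 (Finset.mem_of_mem_erase this)
      have hf2 : ∀ i, i ∈ C → f i = ∅ := by
        intro i hi
        have := hmem i
        unfold colTarget at this
        rw [if_pos hi] at this
        simpa using this
      refine ⟨mkG C f, ⟨mkG_sp C f, ?_⟩, mkG_colFun C f hf hf2⟩
      intro y hy
      have := hmem y
      unfold colTarget at this
      rw [if_neg hy] at this
      have hne : f y ≠ C := (Finset.mem_erase.1 this).1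
      have hsub : f y ⊆ C := Finset.mem_powerset.1 (Finset.mem_of_mem_erase this)
      have : ∃ x ∈ C, x ∉ f y := by
        by_contra hcon
        push_neg at hcon
        exact hne (Finset.Subset.antisymm hsub hcon)
      obtain ⟨x, hx, hxf⟩ := this
      refine ⟨x, hx, ?_⟩
      rintro ⟨-, hadj⟩
      rcases hadj with ⟨h1, h2⟩ | ⟨h1, h2, h3⟩ | ⟨h1, h2, h3⟩
      · exact hy h2
      · exact hxf h3
      · exact h2 hx
  have hinj : Set.InjOn (colFun · C) {G : SimpleGraph (Fin n) | SP G C ∧ ColsOK G C} :=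
    (colFun_injOn C).mono fun G hG => hG.1
  have := Set.ncard_image_of_injOn hinj
  rw [himg, Set.ncard_coe_finset] at this
  rw [← this, Fintype.card_piFinset]
  have hsplit : ∏ i : Fin n, ((colTarget C) i).card
      = (∏ i ∈ C, ((colTarget C) i).card) * ∏ i ∈ Cᶜ, ((colTarget C) i).card :=
    (Finset.prod_mul_prod_compl C _).symm
  rw [hsplit]
  have h1 : ∏ i ∈ C, ((colTarget C) i).card = 1 := by
    apply Finset.prod_eq_one
    intro i hi
    simp [colTarget, hi]
  have h2 : ∏ i ∈ Cᶜ, ((colTarget C) i).card = (2 ^ C.card - 1) ^ (n - C.card) := by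
    have : ∀ i ∈ Cᶜ, ((colTarget C) i).card = 2 ^ C.card - 1 := by
      intro i hi
      rw [Finset.mem_compl] at hi
      simp only [colTarget, if_neg hi]
      rw [Finset.card_erase_of_mem (Finset.mem_powerset_self C), Finset.card_powerset]
    rw [Finset.prod_congr rfl this, Finset.prod_const, Finset.card_compl,
      Fintype.card_fin]
  rw [h1, h2, one_mul]

lemma ncard_bad {C : Finset (Fin n)} {x : Fin n} (hx : x ∈ C) :
    {G : SimpleGraph (Fin n) | SP G C ∧ ∀ y, y ∉ C → ¬ G.Adj x y}.ncard
      ≤ 2 ^ ((C.card - 1) * (n - C.card)) := by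
  classical
  set T : Fin n → Finset (Finset (Fin n)) :=
    fun i => if i ∈ C then ({∅} : Finset (Finset (Fin n))) else (C.erase x).powerset with hT
  have hle : {G : SimpleGraph (Fin n) | SP G C ∧ ∀ y, y ∉ C → ¬ G.Adj x y}.ncard
      ≤ (↑(Fintype.piFinset T) : Set (Fin n → Finset (Fin n))).ncard := by
    apply Set.ncard_le_ncard_of_injOn (colFun · C)
    · rintro G ⟨hsp, hbad⟩
      simp only [Finset.mem_coe, Fintype.mem_piFinset]
      intro i
      by_cases hi : i ∈ C
      · simp [hT, colFun, hi]
      · simp only [hT, if_neg hi, Finset.mem_powerset]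
        intro x' hx'
        obtain ⟨-, hx'C, hadj⟩ := mem_colFun.1 hx'
        refine Finset.mem_erase.2 ⟨?_, hx'C⟩
        rintro rfl
        exact hbad i hi hadj
    · exact (colFun_injOn C).mono fun G hG => hG.1
  refine hle.trans ?_
  rw [Set.ncard_coe_finset, Fintype.card_piFinset]
  have hsplit : ∏ i : Fin n, (T i).card
      = (∏ i ∈ C, (T i).card) * ∏ i ∈ Cᶜ, (T i).card :=
    (Finset.prod_mul_prod_compl C _).symm
  rw [hsplit]
  have h1 : ∏ i ∈ C, (T i).card = 1 := by
    apply Finset.prod_eq_one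
    intro i hi
    simp [hT, hi]
  have h2 : ∏ i ∈ Cᶜ, (T i).card = 2 ^ ((C.card - 1) * (n - C.card)) := by
    have : ∀ i ∈ Cᶜ, (T i).card = 2 ^ (C.card - 1) := by
      intro i hi
      rw [Finset.mem_compl] at hi
      simp only [hT, if_neg hi]
      rw [Finset.card_powerset, Finset.card_erase_of_mem hx]
    rw [Finset.prod_congr rfl this, Finset.prod_const, Finset.card_compl, Fintype.card_fin,
      ← pow_mul]
  rw [h1, h2, one_mul]

end SplitAux

namespace SplitAux

open Finset

variable {n : ℕ}

lemma sp_compl {G : SimpleGraph (Fin n)} {C : Finset (Fin n)} (h : SP G C) : SP Gᶜ Cᶜ := by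
  apply sp_mk
  · intro u hu v hv hne
    rw [Finset.coe_compl, Set.mem_compl_iff, Finset.mem_coe] at hu hv
    exact ⟨hne, h.indep hu hv hne⟩
  · intro u hu v hv hne hadj
    rw [Finset.coe_compl, compl_compl, Finset.mem_coe] at hu hv
    exact hadj.2 (h.clique hu hv hne)

lemma rows_compl {G : SimpleGraph (Fin n)} {C : Finset (Fin n)} (h : RowsOK G C) :
    ColsOK Gᶜ Cᶜ := by
  intro y hy
  rw [Finset.mem_compl, not_not] at hy
  obtain ⟨y', hy', hadj⟩ := h y hy
  refine ⟨y', Finset.mem_compl.2 hy', ?_⟩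
  rw [SimpleGraph.compl_adj]
  push_neg
  intro _
  exact hadj.symm

lemma cols_compl {G : SimpleGraph (Fin n)} {C : Finset (Fin n)} (h : ColsOK G C) :
    RowsOK Gᶜ Cᶜ := by
  intro x hx
  rw [Finset.mem_compl] at hx
  obtain ⟨x', hx', hnadj⟩ := h x hx
  refine ⟨x', by simpa using hx', ?_⟩
  rw [SimpleGraph.compl_adj]
  exact ⟨fun hcon => hx (hcon ▸ hx'), fun hcon => hnadj hcon.symm⟩

lemma ncard_compl_set (A B : Set (SimpleGraph (Fin n)))
    (h : ∀ G, G ∈ A ↔ Gᶜ ∈ B) : A.ncard = B.ncard := by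
  have himg : (fun G : SimpleGraph (Fin n) => Gᶜ) '' A = B := by
    ext H
    simp only [Set.mem_image]
    constructor
    · rintro ⟨G, hG, rfl⟩
      exact (h G).1 hG
    · intro hH
      exact ⟨Hᶜ, (h Hᶜ).2 (by rwa [compl_compl]), compl_compl H⟩
  rw [← himg]
  exact (Set.ncard_image_of_injOn
    (fun G _ G' _ hGG => by simpa using congrArg (·ᶜ) hGG)).symm

lemma ncard_U' (C : Finset (Fin n)) :
    {G : SimpleGraph (Fin n) | SP G C ∧ RowsOK G C}.ncard
      = (2 ^ (n - C.card) - 1) ^ C.card := by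
  have := ncard_compl_set {G : SimpleGraph (Fin n) | SP G C ∧ RowsOK G C}
      {H : SimpleGraph (Fin n) | SP H Cᶜ ∧ ColsOK H Cᶜ} ?_
  · rw [this, ncard_U]
    congr 1
    · rw [Finset.card_compl, Fintype.card_fin]
    · rw [Finset.card_compl, Fintype.card_fin, Nat.sub_sub_self (Finset.card_le_univ C |>.trans_eq (by simp))]
  · intro G
    constructor
    · rintro ⟨hsp, hrows⟩
      exact ⟨sp_compl hsp, rows_compl hrows⟩
    · rintro ⟨hsp, hcols⟩
      have h1 := sp_compl hsp
      have h2 := cols_compl hcols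
      rw [compl_compl, compl_compl] at h1 h2
      exact ⟨h1, h2⟩

lemma ncard_bad' {C : Finset (Fin n)} {y : Fin n} (hy : y ∉ C) :
    {G : SimpleGraph (Fin n) | SP G C ∧ ∀ x ∈ C, G.Adj x y}.ncard
      ≤ 2 ^ (C.card * (n - C.card - 1)) := by
  have heq := ncard_compl_set {G : SimpleGraph (Fin n) | SP G C ∧ ∀ x ∈ C, G.Adj x y}
      {H : SimpleGraph (Fin n) | SP H Cᶜ ∧ ∀ z, z ∉ Cᶜ → ¬ H.Adj y z} ?_
  · rw [heq]
    have := ncard_bad (C := Cᶜ) (x := y) (Finset.mem_compl.2 hy)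
    refine this.trans ?_
    apply Nat.pow_le_pow_right (by norm_num)
    have hcard : C.card ≤ n := by simpa using Finset.card_le_univ C
    rw [Finset.card_compl, Fintype.card_fin, Nat.sub_sub_self hcard, Nat.mul_comm]
  · intro G
    constructor
    · rintro ⟨hsp, hall⟩
      refine ⟨sp_compl hsp, ?_⟩
      intro z hz
      rw [Finset.mem_compl, not_not] at hz
      rw [SimpleGraph.compl_adj]
      push_neg
      intro _
      exact (hall z hz).symm
    · rintro ⟨hsp, hall⟩
      have h1 := sp_compl hsp
      rw [compl_compl, compl_compl] at h1
      refine ⟨h1, ?_⟩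
      intro x hx
      have := hall x (by simpa using hx)
      rw [SimpleGraph.compl_adj] at this
      push_neg at this
      have hne : y ≠ x := fun hcon => hy (hcon ▸ hx)
      exact (this hne).symm

lemma my_ncard_biUnion_le {ι : Type*} (s : Finset ι) (f : ι → Set (SimpleGraph (Fin n))) :
    (⋃ i ∈ s, f i).ncard ≤ ∑ i ∈ s, (f i).ncard := by
  classical
  induction s using Finset.induction_on with
  | empty => simp
  | insert _ _ hnotmem ih =>
    rename_i a s
    rw [Finset.sum_insert hnotmem]
    refine le_trans (le_of_eq (by rw [Finset.set_biUnion_insert])) ?_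
    exact le_trans (Set.ncard_union_le _ _) (add_le_add_right ih _)

lemma my_ncard_biUnion_eq {ι : Type*} (s : Finset ι) (f : ι → Set (SimpleGraph (Fin n)))
    (h : ∀ i ∈ s, ∀ j ∈ s, i ≠ j → Disjoint (f i) (f j)) :
    (⋃ i ∈ s, f i).ncard = ∑ i ∈ s, (f i).ncard := by
  classical
  induction s using Finset.induction_on with
  | empty => simp
  | insert _ _ hnotmem ih =>
    rename_i a s
    rw [Finset.sum_insert hnotmem, Finset.set_biUnion_insert]
    rw [Set.ncard_union_eq ?_ (Set.toFinite _) (Set.toFinite _)]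
    · rw [ih (fun i hi j hj hij => h i (Finset.mem_insert_of_mem hi) j (Finset.mem_insert_of_mem hj) hij)]
    · rw [Set.disjoint_left]
      intro G hG hG2
      rw [Set.mem_iUnion₂] at hG2
      obtain ⟨j, hj, hGj⟩ := hG2
      have hne : a ≠ j := fun hcon => hnotmem (hcon ▸ hj)
      exact (Set.disjoint_left.1 (h a (Finset.mem_insert_self a s) j (Finset.mem_insert_of_mem hj) hne)) hG hGj

/-- lower bound for the Good-count, column side -/
lemma lower_QC (C : Finset (Fin n)) :
    (2 ^ C.card - 1) ^ (n - C.card) - C.card * 2 ^ ((C.card - 1) * (n - C.card))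
      ≤ {G : SimpleGraph (Fin n) | Good G C}.ncard := by
  classical
  set U : Set (SimpleGraph (Fin n)) := {G | SP G C ∧ ColsOK G C} with hU
  set Q : Set (SimpleGraph (Fin n)) := {G | Good G C} with hQ
  have hsub : Q ⊆ U := fun G hG => ⟨hG.1, hG.2.2⟩
  have hdiff : (U \ Q).ncard ≤ C.card * 2 ^ ((C.card - 1) * (n - C.card)) := by
    have hsub2 : U \ Q ⊆ ⋃ x ∈ C, {G : SimpleGraph (Fin n) | SP G C ∧ ∀ y, y ∉ C → ¬ G.Adj x y} := by
      rintro G ⟨⟨hsp, hcols⟩, hnq⟩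
      have : ¬ RowsOK G C := fun hrows => hnq ⟨hsp, hrows, hcols⟩
      unfold RowsOK at this
      push_neg at this
      obtain ⟨x, hx, hbad⟩ := this
      rw [Set.mem_iUnion₂]
      exact ⟨x, hx, hsp, fun y hy => hbad y hy⟩
    refine le_trans (Set.ncard_le_ncard hsub2 (Set.toFinite _)) ?_
    refine le_trans (my_ncard_biUnion_le C _) ?_
    refine le_trans (Finset.sum_le_card_nsmul C _ (2 ^ ((C.card - 1) * (n - C.card)))
      (fun x hx => ncard_bad hx)) ?_
    rw [smul_eq_mul]
  have hU' : U.ncard = (2 ^ C.card - 1) ^ (n - C.card) := ncard_U C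
  have := Set.ncard_diff_add_ncard_of_subset hsub (Set.toFinite _)
  omega

/-- lower bound for the Good-count, row side -/
lemma lower_QC' (C : Finset (Fin n)) :
    (2 ^ (n - C.card) - 1) ^ C.card - (n - C.card) * 2 ^ (C.card * (n - C.card - 1))
      ≤ {G : SimpleGraph (Fin n) | Good G C}.ncard := by
  classical
  set U : Set (SimpleGraph (Fin n)) := {G | SP G C ∧ RowsOK G C} with hU
  set Q : Set (SimpleGraph (Fin n)) := {G | Good G C} with hQ
  have hsub : Q ⊆ U := fun G hG => ⟨hG.1, hG.2.1⟩
  have hdiff : (U \ Q).ncard ≤ (n - C.card) * 2 ^ (C.card * (n - C.card - 1)) := by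
    have hsub2 : U \ Q ⊆ ⋃ y ∈ Cᶜ, {G : SimpleGraph (Fin n) | SP G C ∧ ∀ x ∈ C, G.Adj x y} := by
      rintro G ⟨⟨hsp, hrows⟩, hnq⟩
      have : ¬ ColsOK G C := fun hcols => hnq ⟨hsp, hrows, hcols⟩
      unfold ColsOK at this
      push_neg at this
      obtain ⟨y, hy, hbad⟩ := this
      rw [Set.mem_iUnion₂]
      exact ⟨y, Finset.mem_compl.2 hy, hsp, fun x hx => hbad x hx⟩
    refine le_trans (Set.ncard_le_ncard hsub2 (Set.toFinite _)) ?_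
    refine le_trans (my_ncard_biUnion_le Cᶜ _) ?_
    refine le_trans (Finset.sum_le_card_nsmul Cᶜ _ (2 ^ (C.card * (n - C.card - 1)))
      (fun y hy => ncard_bad' (Finset.mem_compl.1 hy))) ?_
    rw [smul_eq_mul, Finset.card_compl, Fintype.card_fin]
  have hU' : U.ncard = (2 ^ (n - C.card) - 1) ^ C.card := ncard_U' C
  have := Set.ncard_diff_add_ncard_of_subset hsub (Set.toFinite _)
  omega

lemma upper_QC (C : Finset (Fin n)) :
    {G : SimpleGraph (Fin n) | Good G C}.ncard ≤ (2 ^ C.card - 1) ^ (n - C.card) := by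
  rw [← ncard_U C]
  exact Set.ncard_le_ncard (fun G hG => ⟨hG.1, hG.2.2⟩) (Set.toFinite _)

lemma upper_QC' (C : Finset (Fin n)) :
    {G : SimpleGraph (Fin n) | Good G C}.ncard ≤ (2 ^ (n - C.card) - 1) ^ C.card := by
  rw [← ncard_U' C]
  exact Set.ncard_le_ncard (fun G hG => ⟨hG.1, hG.2.1⟩) (Set.toFinite _)

end SplitAux

namespace SplitAux

open Finset

variable {n : ℕ}

lemma good_card {G : SimpleGraph (Fin n)} {C : Finset (Fin n)} (hn : 1 ≤ n)
    (hG : Good G C) : 2 ≤ C.card ∧ C.card + 2 ≤ n := by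
  obtain ⟨hsp, hrows, hcols⟩ := hG
  have hCne : C.Nonempty := by
    rcases Finset.eq_empty_or_nonempty C with h | h
    · exfalso
      obtain ⟨x, hx, -⟩ := hcols ⟨0, hn⟩ (by simp [h])
      simp [h] at hx
    · exact h
  have hC1 : C.card ≠ 1 := by
    intro h1
    obtain ⟨x, hx⟩ := Finset.card_eq_one.1 h1
    obtain ⟨y, hy, hadj⟩ := hrows x (by simp [hx])
    obtain ⟨x', hx', hnadj⟩ := hcols y hy
    rw [hx, Finset.mem_singleton] at hx'
    subst hx'
    exact hnadj hadj
  have hCc : Cᶜ.Nonempty := by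
    rcases Finset.eq_empty_or_nonempty Cᶜ with h | h
    · exfalso
      obtain ⟨x, hx⟩ := hCne
      obtain ⟨y, hy, -⟩ := hrows x hx
      have hmem : y ∈ Cᶜ := Finset.mem_compl.2 hy
      rw [h] at hmem
      exact Finset.notMem_empty y hmem
    · exact h
  have hCc1 : Cᶜ.card ≠ 1 := by
    intro h1
    obtain ⟨y, hy⟩ := Finset.card_eq_one.1 h1
    have hyC : y ∉ C := by
      have : y ∈ Cᶜ := by simp [hy]
      simpa using this
    obtain ⟨x, hx, hnadj⟩ := hcols y hyC
    obtain ⟨y', hy', hadj⟩ := hrows x hx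
    have hmem : y' ∈ Cᶜ := Finset.mem_compl.2 hy'
    rw [hy, Finset.mem_singleton] at hmem
    subst hmem
    exact hnadj hadj
  have h1 : 1 ≤ C.card := Finset.card_pos.2 hCne
  have h2 : 1 ≤ Cᶜ.card := Finset.card_pos.2 hCc
  have h3 : Cᶜ.card = n - C.card := by rw [Finset.card_compl, Fintype.card_fin]
  have h4 : C.card ≤ n := by simpa using Finset.card_le_univ C
  omega

lemma pow_lower (a m : ℕ) (ha : 1 ≤ a) : a ^ m ≤ (a - 1) ^ m + m * a ^ (m - 1) := by
  obtain ⟨b, rfl⟩ : ∃ b, a = b + 1 := ⟨a - 1, by omega⟩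
  simp only [Nat.add_sub_cancel]
  induction m with
  | zero => simp
  | succ m ih =>
    have h1 : b ^ m * (b + 1) = b ^ (m + 1) + b ^ m := by ring
    have h2 : m * (b + 1) ^ (m - 1) * (b + 1) ≤ m * (b + 1) ^ m := by
      rcases Nat.eq_zero_or_pos m with hm | hm
      · simp [hm]
      · rw [Nat.mul_assoc, ← pow_succ, Nat.sub_add_cancel hm]
    have h3 : b ^ m ≤ (b + 1) ^ m := Nat.pow_le_pow_left (by omega) m
    calc (b + 1) ^ (m + 1) = (b + 1) ^ m * (b + 1) := pow_succ _ m
      _ ≤ (b ^ m + m * (b + 1) ^ (m - 1)) * (b + 1) := Nat.mul_le_mul_right _ ih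
      _ = b ^ m * (b + 1) + m * (b + 1) ^ (m - 1) * (b + 1) := by ring
      _ ≤ b ^ (m + 1) + b ^ m + m * (b + 1) ^ m := by
          rw [h1]
          exact Nat.add_le_add_left h2 _
      _ ≤ b ^ (m + 1) + (b + 1) ^ m + m * (b + 1) ^ m :=
          Nat.add_le_add_right (Nat.add_le_add_left h3 _) _
      _ = b ^ (m + 1) + (m + 1) * (b + 1) ^ (m + 1 - 1) := by
          rw [Nat.succ_sub_one]
          ring

lemma two_mul_le_pow : ∀ m : ℕ, 6 ≤ m → 2 * m + 4 ≤ 2 ^ (m - 2) := by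
  intro m hm
  induction m, hm using Nat.le_induction with
  | base => norm_num
  | succ m hm ih =>
    have h2 : (2:ℕ) ≤ 2 ^ (m - 2) := le_trans (by omega) ih
    have h3 : m + 1 - 2 = (m - 2) + 1 := by omega
    rw [h3, pow_succ]
    linarith

lemma choose_le_two_pow (c : ℕ) : Nat.choose n c ≤ 2 ^ n := by
  rcases Nat.lt_or_ge n c with h | h
  · rw [Nat.choose_eq_zero_of_lt h]; positivity
  · calc Nat.choose n c ≤ ∑ k ∈ Finset.range (n + 1), Nat.choose n k :=
        Finset.single_le_sum (fun k _ => Nat.zero_le _) (Finset.mem_range.2 (by omega))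
    _ = 2 ^ n := Nat.sum_range_choose n

lemma two_pow_le_choose (n : ℕ) : 2 ^ n ≤ (n + 1) * Nat.choose n (n / 2) := by
  calc (2:ℕ) ^ n = ∑ k ∈ Finset.range (n + 1), Nat.choose n k := (Nat.sum_range_choose n).symm
  _ ≤ (Finset.range (n + 1)).card • Nat.choose n (n / 2) :=
      Finset.sum_le_card_nsmul _ _ _ (fun k _ => Nat.choose_le_middle k n)
  _ = (n + 1) * Nat.choose n (n / 2) := by rw [Finset.card_range, smul_eq_mul]

lemma exp_le_col {c : ℕ} (hn : 4 ≤ n) (hc2 : 2 ≤ c) (hch : c ≤ n / 2) :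
    (c - 1) * (n - c) ≤ (n / 2 - 1) * (n - n / 2) := by
  set q := n / 2 with hq
  have hqn : 2 * q ≤ n := by omega
  have h2 : c ≤ n := by omega
  have key : (0:ℤ) ≤ ((q:ℤ) - c) * ((n:ℤ) + 1 - q - c) := by
    apply mul_nonneg
    · have : c ≤ q := hch
      push_cast
      omega
    · push_cast
      omega
  zify [show 1 ≤ c by omega, h2, show 1 ≤ q by omega, show q ≤ n by omega]
  nlinarith [key]

lemma exp_le_row {c : ℕ} (hn : 4 ≤ n) (hch : n / 2 + 1 ≤ c) (hcn : c ≤ n - 2) :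
    c * (n - c - 1) ≤ (n / 2 - 1) * (n - n / 2) := by
  set q := n / 2 with hq
  have hqn : 2 * q ≤ n := by omega
  have hqn2 : n ≤ 2 * q + 1 := by omega
  have key : (0:ℤ) ≤ ((c:ℤ) - q - 1) * ((c:ℤ) + q + 1 - n) := by
    apply mul_nonneg
    · push_cast
      omega
    · push_cast
      omega
  zify [show c ≤ n by omega, show 1 ≤ n - c by omega, show 1 ≤ q by omega, show q ≤ n by omega]
  nlinarith [key]

lemma W_ineq : ∀ m : ℕ, 67 ≤ m → 4 * m ^ 2 * (m + 1) * 3 ^ (m / 3 + 1)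
    ≤ 2 ^ (m / 3 + 1 + (m - m / 2)) := by
  intro m
  induction m using Nat.strong_induction_on with
  | h m ih =>
    intro hm
    rcases Nat.lt_or_ge m 73 with h | h
    · interval_cases m <;> norm_num
    · have h6 : m - 6 < m := by omega
      have h67 : 67 ≤ m - 6 := by omega
      have hW := ih (m - 6) h6 h67
      have e1 : m / 3 + 1 = ((m - 6) / 3 + 1) + 2 := by omega
      have e2 : m / 3 + 1 + (m - m / 2) = ((m - 6) / 3 + 1 + (m - 6 - (m - 6) / 2)) + 5 := by
        omega
      have hpoly : 4 * m ^ 2 * (m + 1) * 9 ≤ (4 * (m - 6) ^ 2 * (m - 6 + 1)) * 32 := by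
        zify [show 6 ≤ m by omega]
        nlinarith [show (73:ℤ) ≤ (m:ℤ) by exact_mod_cast h]
      rw [e2, e1, pow_add]
      calc 4 * m ^ 2 * (m + 1) * (3 ^ ((m - 6) / 3 + 1) * 3 ^ 2)
          = (4 * m ^ 2 * (m + 1) * 9) * 3 ^ ((m - 6) / 3 + 1) := by ring
        _ ≤ ((4 * (m - 6) ^ 2 * (m - 6 + 1)) * 32) * 3 ^ ((m - 6) / 3 + 1) :=
            Nat.mul_le_mul_right _ hpoly
        _ = (4 * (m - 6) ^ 2 * (m - 6 + 1) * 3 ^ ((m - 6) / 3 + 1)) * 32 := by ring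
        _ ≤ 2 ^ ((m - 6) / 3 + 1 + (m - 6 - (m - 6) / 2)) * 32 := Nat.mul_le_mul_right _ hW
        _ = 2 ^ ((m - 6) / 3 + 1 + (m - 6 - (m - 6) / 2) + 5) := by simp [pow_add]

end SplitAux

namespace SplitAux

open Finset

variable {n : ℕ}

lemma P_eq_sum (hn : 1 ≤ n) :
    {G : SimpleGraph (Fin n) | IsSplit G ∧ questioning G = ∅}.ncard
      = ∑ c ∈ Finset.Icc 2 (n - 2), ∑ C ∈ Finset.powersetCard c (Finset.univ : Finset (Fin n)),
          {G : SimpleGraph (Fin n) | Good G C}.ncard := by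
  classical
  have hset : {G : SimpleGraph (Fin n) | IsSplit G ∧ questioning G = ∅}
      = ⋃ C ∈ (Finset.univ : Finset (Finset (Fin n))), {G : SimpleGraph (Fin n) | Good G C} := by
    ext G
    simp only [Set.mem_setOf_eq, Set.mem_iUnion₂]
    constructor
    · rintro ⟨h1, h2⟩
      obtain ⟨C, hC⟩ := exists_good h1 h2
      exact ⟨C, Finset.mem_univ C, hC⟩
    · rintro ⟨C, -, hC⟩
      exact ⟨good_isSplit hC, good_questioning hC⟩
  rw [hset, my_ncard_biUnion_eq _ _ ?_]
  · rw [← Finset.powerset_univ, Finset.sum_powerset]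
    rw [Finset.card_univ, Fintype.card_fin]
    symm
    apply Finset.sum_subset
    · intro c hc
      rw [Finset.mem_Icc] at hc
      rw [Finset.mem_range]
      omega
    · intro c hc1 hc2
      rw [Finset.mem_Icc] at hc2
      apply Finset.sum_eq_zero
      intro C hC
      have hcard : C.card = c := Finset.mem_powersetCard_univ.1 hC
      have hempty : {G : SimpleGraph (Fin n) | Good G C} = ∅ := by
        ext G
        simp only [Set.mem_setOf_eq, Set.mem_empty_iff_false, iff_false]
        intro hG
        obtain ⟨hg1, hg2⟩ := good_card hn hG
        omega
      rw [hempty]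
      simp
  · intro C _ C' _ hne
    rw [Set.disjoint_left]
    intro G hG hG'
    exact hne (good_unique hG hG')

lemma main_term_lower (a b : ℕ) (ha : 4 ≤ a) (hab : a ≤ b) (hba : b ≤ a + 1) :
    2 ^ ((a+1)*(b+2)) * 2 ^ (b+1) + (a+2) * 2 ^ ((a+1)*(b+2)) ≤ (2 ^ (a+2) - 1) ^ (b+2) := by
  have hb1 : a + 2 ≤ 2 ^ b := by
    have := two_mul_le_pow (b + 2) (by omega)
    have hs : b + 2 - 2 = b := by omega
    rw [hs] at this
    omega
  have hb2 : b + 2 ≤ 2 ^ a := by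
    have := two_mul_le_pow (a + 2) (by omega)
    have hs : a + 2 - 2 = a := by omega
    rw [hs] at this
    omega
  have c1 : 2 ^ ((a+1)*(b+2)) * 2 ^ (b+1) = 2 ^ (a*b+2*a+2*b+3) := by
    rw [← pow_add]
    congr 1
    ring
  have c2 : (a+2) * 2 ^ ((a+1)*(b+2)) ≤ 2 ^ (a*b+2*a+2*b+2) := by
    calc (a+2) * 2 ^ ((a+1)*(b+2)) ≤ 2 ^ b * 2 ^ ((a+1)*(b+2)) :=
          Nat.mul_le_mul_right _ hb1
      _ = 2 ^ (a*b+2*a+2*b+2) := by rw [← pow_add]; congr 1; ring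
  have c3 : (b+2) * 2 ^ ((a+2)*(b+1)) ≤ 2 ^ (a*b+2*a+2*b+2) := by
    calc (b+2) * 2 ^ ((a+2)*(b+1)) ≤ 2 ^ a * 2 ^ ((a+2)*(b+1)) :=
          Nat.mul_le_mul_right _ hb2
      _ = 2 ^ (a*b+2*a+2*b+2) := by rw [← pow_add]; congr 1; ring
  have c4 : 2 ^ (a*b+2*a+2*b+3) + 2 ^ (a*b+2*a+2*b+2) + 2 ^ (a*b+2*a+2*b+2)
      = 2 ^ ((a+2)*(b+2)) := by
    rw [show a*b+2*a+2*b+3 = (a*b+2*a+2*b+2)+1 by ring,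
      show (a+2)*(b+2) = (a*b+2*a+2*b+2)+2 by ring, pow_add, pow_add]
    ring
  have hpl := pow_lower (2 ^ (a+2)) (b+2) Nat.one_le_two_pow
  rw [← pow_mul, ← pow_mul] at hpl
  have hs2 : b + 2 - 1 = b + 1 := by omega
  rw [hs2] at hpl
  -- hpl : 2 ^ ((a+2)*(b+2)) ≤ (2^(a+2) - 1)^(b+2) + (b+2) * 2^((a+2)*(b+1))
  linarith

end SplitAux

namespace SplitAux

open Finset

lemma main_term_lower' (h m : ℕ) (hh : 6 ≤ h) (hm : h ≤ m) (hm2 : m ≤ h + 1) :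
    2 ^ ((h-1)*m) * 2 ^ (m-1) + h * 2 ^ ((h-1)*m) ≤ (2 ^ h - 1) ^ m := by
  obtain ⟨a, rfl⟩ : ∃ a, h = a + 2 := ⟨h - 2, by omega⟩
  obtain ⟨b, rfl⟩ : ∃ b, m = b + 2 := ⟨m - 2, by omega⟩
  rw [show a + 2 - 1 = a + 1 from by omega, show b + 2 - 1 = b + 1 from by omega]
  exact main_term_lower a b (by omega) (by omega) (by omega)

lemma final_nat (n : ℕ) (hn : 67 ≤ n) :
    (2*n^2*2^n*2^((n/2-1)*(n-n/2))) * 3^(n/3+1)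
      ≤ 2^(n/3+1) * (Nat.choose n (n/2) * (2^((n/2-1)*(n-n/2)) * 2^(n-n/2-1))) := by
  have hW := W_ineq n hn
  have hch := two_pow_le_choose n
  have hpos : 0 < 2*(n+1) := by omega
  apply Nat.le_of_mul_le_mul_right _ hpos
  calc (2*n^2*2^n*2^((n/2-1)*(n-n/2))) * 3^(n/3+1) * (2*(n+1))
      = (4*n^2*(n+1)*3^(n/3+1)) * (2^n * 2^((n/2-1)*(n-n/2))) := by ring
    _ ≤ (2^(n/3+1 + (n - n/2))) * (2^n * 2^((n/2-1)*(n-n/2))) := Nat.mul_le_mul_right _ hW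
    _ = (2^(n/3+1) * 2^(n-n/2-1) * 2^((n/2-1)*(n-n/2))) * (2 * 2^n) := by
        have hsp : (2:ℕ)^(n - n/2) = 2^(n - n/2 - 1) * 2 := by
          rw [← pow_succ]
          congr 1
          omega
        rw [pow_add, hsp]
        ring
    _ ≤ (2^(n/3+1) * 2^(n-n/2-1) * 2^((n/2-1)*(n-n/2))) * (2 * ((n+1) * Nat.choose n (n/2))) :=
        Nat.mul_le_mul_left _ (Nat.mul_le_mul_left _ hch)
    _ = 2^(n/3+1) * (Nat.choose n (n/2) * (2^((n/2-1)*(n-n/2)) * 2^(n-n/2-1))) * (2*(n+1)) := by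
        ring

end SplitAux

open SplitAux in
/-- There exists `N` such that for all `n ≥ N`, letting `P n` be the number
of split graphs with vertex set `{1,…,n}` with empty questioning set, and
`S n = ∑_{c=2}^{⌊n/2⌋} C(n,c)·(2^c − 1)^{n−c} + ∑_{c=⌊n/2⌋+1}^{n−2} C(n,c)·(2^{n−c} − 1)^c`,
we have `P n ≤ S n ≤ (1 + (2/3)^{n/3}) · P n`. -/
theorem approx_count_split_empty_questioning :
    ∃ N : ℕ, ∀ n : ℕ, N ≤ n →
      ((Set.ncard {G : SimpleGraph (Fin n) | IsSplit G ∧ questioning G = ∅} : ℝ) ≤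
        ((∑ c ∈ Finset.Icc 2 (n / 2), Nat.choose n c * (2 ^ c - 1) ^ (n - c)
          + ∑ c ∈ Finset.Icc (n / 2 + 1) (n - 2),
              Nat.choose n c * (2 ^ (n - c) - 1) ^ c : ℕ) : ℝ)) ∧
      (((∑ c ∈ Finset.Icc 2 (n / 2), Nat.choose n c * (2 ^ c - 1) ^ (n - c)
          + ∑ c ∈ Finset.Icc (n / 2 + 1) (n - 2),
              Nat.choose n c * (2 ^ (n - c) - 1) ^ c : ℕ) : ℝ) ≤
        (1 + ((2 : ℝ) / 3) ^ ((n : ℝ) / 3)) *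
          (Set.ncard {G : SimpleGraph (Fin n) | IsSplit G ∧ questioning G = ∅} : ℝ)) := by
  classical
  refine ⟨67, fun n hn => ?_⟩
  have hn1 : 1 ≤ n := by omega
  have hn4 : 4 ≤ n := by omega
  -- interval split
  have hIccsplit : Finset.Icc 2 (n-2) = Finset.Icc 2 (n/2) ∪ Finset.Icc (n/2+1) (n-2) := by
    ext a
    simp only [Finset.mem_Icc, Finset.mem_union]
    omega
  have hdisj : Disjoint (Finset.Icc 2 (n/2)) (Finset.Icc (n/2+1) (n-2)) := by
    rw [Finset.disjoint_left]
    intro a ha hb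
    rw [Finset.mem_Icc] at ha hb
    omega
  have hPsum : {G : SimpleGraph (Fin n) | IsSplit G ∧ questioning G = ∅}.ncard
      = (∑ c ∈ Finset.Icc 2 (n/2), ∑ C ∈ Finset.powersetCard c (Finset.univ : Finset (Fin n)),
          {G : SimpleGraph (Fin n) | Good G C}.ncard)
        + ∑ c ∈ Finset.Icc (n/2+1) (n-2), ∑ C ∈ Finset.powersetCard c (Finset.univ : Finset (Fin n)),
            {G : SimpleGraph (Fin n) | Good G C}.ncard := by
    rw [P_eq_sum hn1, hIccsplit, Finset.sum_union hdisj]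
  -- upper bounds for the two halves
  have hup1 : ∑ c ∈ Finset.Icc 2 (n/2), ∑ C ∈ Finset.powersetCard c (Finset.univ : Finset (Fin n)),
        {G : SimpleGraph (Fin n) | Good G C}.ncard
      ≤ ∑ c ∈ Finset.Icc 2 (n/2), Nat.choose n c * (2 ^ c - 1) ^ (n - c) := by
    apply Finset.sum_le_sum
    intro c hc
    have hcard : (Finset.powersetCard c (Finset.univ : Finset (Fin n))).card = Nat.choose n c := by
      rw [Finset.card_powersetCard, Finset.card_univ, Fintype.card_fin]
    calc ∑ C ∈ Finset.powersetCard c (Finset.univ : Finset (Fin n)),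
          {G : SimpleGraph (Fin n) | Good G C}.ncard
        ≤ (Finset.powersetCard c (Finset.univ : Finset (Fin n))).card • ((2 ^ c - 1) ^ (n - c)) := by
          apply Finset.sum_le_card_nsmul
          intro C hC
          have hCc : C.card = c := Finset.mem_powersetCard_univ.1 hC
          rw [← hCc]
          exact upper_QC C
      _ = Nat.choose n c * (2 ^ c - 1) ^ (n - c) := by rw [hcard, smul_eq_mul]
  have hup2 : ∑ c ∈ Finset.Icc (n/2+1) (n-2), ∑ C ∈ Finset.powersetCard c (Finset.univ : Finset (Fin n)),
        {G : SimpleGraph (Fin n) | Good G C}.ncard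
      ≤ ∑ c ∈ Finset.Icc (n/2+1) (n-2), Nat.choose n c * (2 ^ (n - c) - 1) ^ c := by
    apply Finset.sum_le_sum
    intro c hc
    have hcard : (Finset.powersetCard c (Finset.univ : Finset (Fin n))).card = Nat.choose n c := by
      rw [Finset.card_powersetCard, Finset.card_univ, Fintype.card_fin]
    calc ∑ C ∈ Finset.powersetCard c (Finset.univ : Finset (Fin n)),
          {G : SimpleGraph (Fin n) | Good G C}.ncard
        ≤ (Finset.powersetCard c (Finset.univ : Finset (Fin n))).card • ((2 ^ (n - c) - 1) ^ c) := by
          apply Finset.sum_le_card_nsmul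
          intro C hC
          have hCc : C.card = c := Finset.mem_powersetCard_univ.1 hC
          rw [← hCc]
          exact upper_QC' C
      _ = Nat.choose n c * (2 ^ (n - c) - 1) ^ c := by rw [hcard, smul_eq_mul]
  -- lower bounds for the two halves
  have hlow1 : ∑ c ∈ Finset.Icc 2 (n/2),
        Nat.choose n c * ((2 ^ c - 1) ^ (n - c) - c * 2 ^ ((c-1)*(n-c)))
      ≤ ∑ c ∈ Finset.Icc 2 (n/2), ∑ C ∈ Finset.powersetCard c (Finset.univ : Finset (Fin n)),
          {G : SimpleGraph (Fin n) | Good G C}.ncard := by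
    apply Finset.sum_le_sum
    intro c hc
    have hcard : (Finset.powersetCard c (Finset.univ : Finset (Fin n))).card = Nat.choose n c := by
      rw [Finset.card_powersetCard, Finset.card_univ, Fintype.card_fin]
    calc Nat.choose n c * ((2 ^ c - 1) ^ (n - c) - c * 2 ^ ((c-1)*(n-c)))
        = (Finset.powersetCard c (Finset.univ : Finset (Fin n))).card
            • ((2 ^ c - 1) ^ (n - c) - c * 2 ^ ((c-1)*(n-c))) := by rw [hcard, smul_eq_mul]
      _ ≤ _ := by
          apply Finset.card_nsmul_le_sum
          intro C hC
          have hCc : C.card = c := Finset.mem_powersetCard_univ.1 hC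
          rw [← hCc]
          exact lower_QC C
  have hlow2 : ∑ c ∈ Finset.Icc (n/2+1) (n-2),
        Nat.choose n c * ((2 ^ (n - c) - 1) ^ c - (n - c) * 2 ^ (c*(n-c-1)))
      ≤ ∑ c ∈ Finset.Icc (n/2+1) (n-2), ∑ C ∈ Finset.powersetCard c (Finset.univ : Finset (Fin n)),
          {G : SimpleGraph (Fin n) | Good G C}.ncard := by
    apply Finset.sum_le_sum
    intro c hc
    have hcard : (Finset.powersetCard c (Finset.univ : Finset (Fin n))).card = Nat.choose n c := by
      rw [Finset.card_powersetCard, Finset.card_univ, Fintype.card_fin]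
    calc Nat.choose n c * ((2 ^ (n - c) - 1) ^ c - (n - c) * 2 ^ (c*(n-c-1)))
        = (Finset.powersetCard c (Finset.univ : Finset (Fin n))).card
            • ((2 ^ (n - c) - 1) ^ c - (n - c) * 2 ^ (c*(n-c-1))) := by rw [hcard, smul_eq_mul]
      _ ≤ _ := by
          apply Finset.card_nsmul_le_sum
          intro C hC
          have hCc : C.card = c := Finset.mem_powersetCard_univ.1 hC
          rw [← hCc]
          exact lower_QC' C
  -- P ≤ S
  have hPS : {G : SimpleGraph (Fin n) | IsSplit G ∧ questioning G = ∅}.ncard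
      ≤ (∑ c ∈ Finset.Icc 2 (n / 2), Nat.choose n c * (2 ^ c - 1) ^ (n - c)
          + ∑ c ∈ Finset.Icc (n / 2 + 1) (n - 2), Nat.choose n c * (2 ^ (n - c) - 1) ^ c) := by
    rw [hPsum]
    exact Nat.add_le_add hup1 hup2
  -- S ≤ P + E
  have hS1E : ∑ c ∈ Finset.Icc 2 (n / 2), Nat.choose n c * (2 ^ c - 1) ^ (n - c)
      ≤ (∑ c ∈ Finset.Icc 2 (n/2),
          Nat.choose n c * ((2 ^ c - 1) ^ (n - c) - c * 2 ^ ((c-1)*(n-c))))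
        + ∑ c ∈ Finset.Icc 2 (n/2), Nat.choose n c * (c * 2 ^ ((c-1)*(n-c))) := by
    rw [← Finset.sum_add_distrib]
    apply Finset.sum_le_sum
    intro c hc
    rw [← Nat.mul_add]
    exact Nat.mul_le_mul_left _ le_tsub_add
  have hS2E : ∑ c ∈ Finset.Icc (n / 2 + 1) (n - 2), Nat.choose n c * (2 ^ (n - c) - 1) ^ c
      ≤ (∑ c ∈ Finset.Icc (n/2+1) (n-2),
          Nat.choose n c * ((2 ^ (n - c) - 1) ^ c - (n - c) * 2 ^ (c*(n-c-1))))
        + ∑ c ∈ Finset.Icc (n/2+1) (n-2), Nat.choose n c * ((n - c) * 2 ^ (c*(n-c-1))) := by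
    rw [← Finset.sum_add_distrib]
    apply Finset.sum_le_sum
    intro c hc
    rw [← Nat.mul_add]
    exact Nat.mul_le_mul_left _ le_tsub_add
  have hSPE : (∑ c ∈ Finset.Icc 2 (n / 2), Nat.choose n c * (2 ^ c - 1) ^ (n - c)
          + ∑ c ∈ Finset.Icc (n / 2 + 1) (n - 2), Nat.choose n c * (2 ^ (n - c) - 1) ^ c)
      ≤ {G : SimpleGraph (Fin n) | IsSplit G ∧ questioning G = ∅}.ncard
        + ((∑ c ∈ Finset.Icc 2 (n/2), Nat.choose n c * (c * 2 ^ ((c-1)*(n-c))))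
          + ∑ c ∈ Finset.Icc (n/2+1) (n-2), Nat.choose n c * ((n - c) * 2 ^ (c*(n-c-1)))) := by
    rw [hPsum]
    omega
  -- E is small
  have hE1 : ∑ c ∈ Finset.Icc 2 (n/2), Nat.choose n c * (c * 2 ^ ((c-1)*(n-c)))
      ≤ n * (2^n * (n * 2 ^ ((n/2-1)*(n-n/2)))) := by
    calc ∑ c ∈ Finset.Icc 2 (n/2), Nat.choose n c * (c * 2 ^ ((c-1)*(n-c)))
        ≤ (Finset.Icc 2 (n/2)).card • (2^n * (n * 2 ^ ((n/2-1)*(n-n/2)))) := by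
          apply Finset.sum_le_card_nsmul
          intro c hc
          rw [Finset.mem_Icc] at hc
          apply Nat.mul_le_mul (choose_le_two_pow c)
          apply Nat.mul_le_mul (by omega : c ≤ n)
          exact Nat.pow_le_pow_right (by norm_num) (exp_le_col hn4 hc.1 hc.2)
      _ ≤ n * (2^n * (n * 2 ^ ((n/2-1)*(n-n/2)))) := by
          rw [smul_eq_mul]
          apply Nat.mul_le_mul_right
          rw [Nat.card_Icc]
          omega
  have hE2 : ∑ c ∈ Finset.Icc (n/2+1) (n-2), Nat.choose n c * ((n - c) * 2 ^ (c*(n-c-1)))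
      ≤ n * (2^n * (n * 2 ^ ((n/2-1)*(n-n/2)))) := by
    calc ∑ c ∈ Finset.Icc (n/2+1) (n-2), Nat.choose n c * ((n - c) * 2 ^ (c*(n-c-1)))
        ≤ (Finset.Icc (n/2+1) (n-2)).card • (2^n * (n * 2 ^ ((n/2-1)*(n-n/2)))) := by
          apply Finset.sum_le_card_nsmul
          intro c hc
          rw [Finset.mem_Icc] at hc
          apply Nat.mul_le_mul (choose_le_two_pow c)
          apply Nat.mul_le_mul (by omega : n - c ≤ n)
          exact Nat.pow_le_pow_right (by norm_num) (exp_le_row hn4 hc.1 hc.2)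
      _ ≤ n * (2^n * (n * 2 ^ ((n/2-1)*(n-n/2)))) := by
          rw [smul_eq_mul]
          apply Nat.mul_le_mul_right
          rw [Nat.card_Icc]
          omega
  have hE : (∑ c ∈ Finset.Icc 2 (n/2), Nat.choose n c * (c * 2 ^ ((c-1)*(n-c))))
        + ∑ c ∈ Finset.Icc (n/2+1) (n-2), Nat.choose n c * ((n - c) * 2 ^ (c*(n-c-1)))
      ≤ 2*n^2*2^n*2^((n/2-1)*(n-n/2)) := by
    have : n * (2^n * (n * 2 ^ ((n/2-1)*(n-n/2)))) + n * (2^n * (n * 2 ^ ((n/2-1)*(n-n/2))))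
        = 2*n^2*2^n*2^((n/2-1)*(n-n/2)) := by ring
    omega
  -- P lower bound via the middle term
  have hmain : 2 ^ ((n/2-1)*(n-n/2)) * 2 ^ (n-n/2-1)
      ≤ (2 ^ (n/2) - 1) ^ (n - n/2) - (n/2) * 2 ^ ((n/2-1)*(n-n/2)) := by
    have := main_term_lower' (n/2) (n - n/2) (by omega) (by omega) (by omega)
    omega
  have hterm : Nat.choose n (n/2) * ((2 ^ (n/2) - 1) ^ (n - n/2) - (n/2) * 2 ^ ((n/2-1)*(n-n/2)))
      ≤ ∑ c ∈ Finset.Icc 2 (n/2),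
          Nat.choose n c * ((2 ^ c - 1) ^ (n - c) - c * 2 ^ ((c-1)*(n-c))) := by
    apply Finset.single_le_sum (f := fun c => Nat.choose n c * ((2 ^ c - 1) ^ (n - c) - c * 2 ^ ((c-1)*(n-c))))
    · intro i _
      exact Nat.zero_le _
    · rw [Finset.mem_Icc]
      omega
  have hPlow : Nat.choose n (n/2) * (2 ^ ((n/2-1)*(n-n/2)) * 2 ^ (n-n/2-1))
      ≤ {G : SimpleGraph (Fin n) | IsSplit G ∧ questioning G = ∅}.ncard := by
    have h1 : Nat.choose n (n/2) * (2 ^ ((n/2-1)*(n-n/2)) * 2 ^ (n-n/2-1))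
        ≤ Nat.choose n (n/2) * ((2 ^ (n/2) - 1) ^ (n - n/2) - (n/2) * 2 ^ ((n/2-1)*(n-n/2))) :=
      Nat.mul_le_mul_left _ hmain
    have h2 := hterm
    have h3 := hlow1
    rw [hPsum]
    omega
  -- real-number conclusion
  constructor
  · exact_mod_cast hPS
  · have hrpow_nonneg : (0:ℝ) ≤ ((2 : ℝ) / 3) ^ ((n : ℝ) / 3) :=
      Real.rpow_nonneg (by norm_num) _
    have h3 : ((2:ℝ)/3) ^ ((n/3 + 1 : ℕ) : ℝ) ≤ ((2 : ℝ) / 3) ^ ((n : ℝ) / 3) := by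
      apply Real.rpow_le_rpow_of_exponent_ge (by norm_num) (by norm_num)
      rw [div_le_iff₀ (by norm_num : (0:ℝ) < 3)]
      have : n ≤ 3 * (n/3 + 1) := by omega
      calc (n:ℝ) ≤ ((3 * (n/3 + 1) : ℕ) : ℝ) := by exact_mod_cast this
        _ = ((n/3 + 1 : ℕ) : ℝ) * 3 := by push_cast; ring
    rw [Real.rpow_natCast] at h3
    have hfin := final_nat n hn
    -- cast everything
    have hEP : ((((∑ c ∈ Finset.Icc 2 (n/2), Nat.choose n c * (c * 2 ^ ((c-1)*(n-c))))
          + ∑ c ∈ Finset.Icc (n/2+1) (n-2), Nat.choose n c * ((n - c) * 2 ^ (c*(n-c-1)))) : ℕ) : ℝ)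
        ≤ ((2 : ℝ) / 3) ^ ((n : ℝ) / 3)
          * ({G : SimpleGraph (Fin n) | IsSplit G ∧ questioning G = ∅}.ncard : ℝ) := by
      have hXE : ((((∑ c ∈ Finset.Icc 2 (n/2), Nat.choose n c * (c * 2 ^ ((c-1)*(n-c))))
            + ∑ c ∈ Finset.Icc (n/2+1) (n-2), Nat.choose n c * ((n - c) * 2 ^ (c*(n-c-1)))) : ℕ) : ℝ)
          ≤ ((2*n^2*2^n*2^((n/2-1)*(n-n/2)) : ℕ) : ℝ) := Nat.cast_le.2 hE
      have hKP : ((Nat.choose n (n/2) * (2 ^ ((n/2-1)*(n-n/2)) * 2 ^ (n-n/2-1)) : ℕ) : ℝ)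
          ≤ ({G : SimpleGraph (Fin n) | IsSplit G ∧ questioning G = ∅}.ncard : ℝ) :=
        Nat.cast_le.2 hPlow
      have hfinR : ((2*n^2*2^n*2^((n/2-1)*(n-n/2)) : ℕ) : ℝ) * (3:ℝ)^(n/3+1)
          ≤ (2:ℝ)^(n/3+1) * ((Nat.choose n (n/2) * (2 ^ ((n/2-1)*(n-n/2)) * 2 ^ (n-n/2-1)) : ℕ) : ℝ) := by
        exact_mod_cast hfin
      have hstep : ((2*n^2*2^n*2^((n/2-1)*(n-n/2)) : ℕ) : ℝ)
          ≤ ((2:ℝ)/3)^(n/3+1) * ((Nat.choose n (n/2) * (2 ^ ((n/2-1)*(n-n/2)) * 2 ^ (n-n/2-1)) : ℕ) : ℝ) := by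
        rw [div_pow, div_mul_eq_mul_div, le_div_iff₀ (by positivity : (0:ℝ) < 3^(n/3+1))]
        linarith [hfinR]
      calc ((((∑ c ∈ Finset.Icc 2 (n/2), Nat.choose n c * (c * 2 ^ ((c-1)*(n-c))))
            + ∑ c ∈ Finset.Icc (n/2+1) (n-2), Nat.choose n c * ((n - c) * 2 ^ (c*(n-c-1)))) : ℕ) : ℝ)
          ≤ ((2*n^2*2^n*2^((n/2-1)*(n-n/2)) : ℕ) : ℝ) := hXE
        _ ≤ ((2:ℝ)/3)^(n/3+1) * ((Nat.choose n (n/2) * (2 ^ ((n/2-1)*(n-n/2)) * 2 ^ (n-n/2-1)) : ℕ) : ℝ) := hstep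
        _ ≤ ((2 : ℝ) / 3) ^ ((n : ℝ) / 3) * ((Nat.choose n (n/2) * (2 ^ ((n/2-1)*(n-n/2)) * 2 ^ (n-n/2-1)) : ℕ) : ℝ) := by
            apply mul_le_mul_of_nonneg_right h3 (by positivity)
        _ ≤ ((2 : ℝ) / 3) ^ ((n : ℝ) / 3)
            * ({G : SimpleGraph (Fin n) | IsSplit G ∧ questioning G = ∅}.ncard : ℝ) := by
            apply mul_le_mul_of_nonneg_left hKP hrpow_nonneg
    have hSPE' : ((∑ c ∈ Finset.Icc 2 (n / 2), Nat.choose n c * (2 ^ c - 1) ^ (n - c)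
          + ∑ c ∈ Finset.Icc (n / 2 + 1) (n - 2), Nat.choose n c * (2 ^ (n - c) - 1) ^ c : ℕ) : ℝ)
        ≤ ({G : SimpleGraph (Fin n) | IsSplit G ∧ questioning G = ∅}.ncard : ℝ)
          + ((((∑ c ∈ Finset.Icc 2 (n/2), Nat.choose n c * (c * 2 ^ ((c-1)*(n-c))))
            + ∑ c ∈ Finset.Icc (n/2+1) (n-2), Nat.choose n c * ((n - c) * 2 ^ (c*(n-c-1)))) : ℕ) : ℝ) := by
      rw [← Nat.cast_add]
      exact Nat.cast_le.2 hSPE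
    rw [one_add_mul]
    linarith [hEP, hSPE']
end
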